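/- arXiv:2309.13540 — 2 statements merged into one kernel-verified Lean document; each statement's English description precedes it below -/
import Mathlib

section
/- Let φ be an automorphism of H × ℤ^k (k ≥ 1), where H = π₁(Σ_g) or H = F_g with g ≥ 2. Then there exist an automorphism α of H, an automorphism 𝓛 of ℤ^k, and a group homomorphism γ : H → ℤ^k such that φ(u, v) = (α(u), γ(u) + 𝓛(v)) for all (u, v) ∈ H × ℤ^k. -/
open HNNExtension HNNExtension.NormalWord Subgroup
open scoped commutatorElement

namespace HNNCenter

theorem center_eq {G : Type*} [Group G] {A B : Subgroup G} (φ : A ≃* B)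
    (hA : A ≠ ⊤) (hB : B ≠ ⊤) (z : HNNExtension G A B φ)
    (hz : ∀ q, z * q = q * z) :
    ∃ g : G, z = of g ∧ g ∈ B ∧ ∀ x : G, g * x = x * g := by
  classical
  rcases NormalWord.TransversalPair.nonempty G A B with ⟨d⟩
  set nw := NormalWord.equiv φ d z with hnw
  have hzprod : ReducedWord.prod φ nw.toReducedWord = z := by
    have := (NormalWord.equiv φ d).symm_apply_apply z
    exact this
  set rw := nw.toReducedWord with hrw
  rcases List.eq_nil_or_concat rw.toList with hnil | ⟨L, p, hcat⟩
  · -- word is just `of rw.head`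
    have hz' : z = of rw.head := by
      rw [← hzprod]
      simp [ReducedWord.prod, hnil]
    refine ⟨rw.head, hz', ?_, ?_⟩
    · -- membership in B via Britton
      by_contra hgB
      have hcomm : of rw.head = (t : HNNExtension G A B φ)⁻¹ * of rw.head * t := by
        rw [← hz', mul_assoc, hz t, ← mul_assoc, inv_mul_cancel, one_mul]
      let w' : ReducedWord G A B :=
        ⟨1, [((-1 : ℤˣ), rw.head), ((1 : ℤˣ), (1 : G))], by
          refine List.isChain_cons_cons.2 ⟨?_, List.isChain_singleton _⟩
          intro hmem
          exact absurd hmem (by simpa using hgB)⟩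
      have hw'prod : ReducedWord.prod φ w' = (t : HNNExtension G A B φ)⁻¹ * of rw.head * t := by
        simp [ReducedWord.prod, w', mul_assoc]
      have : w'.toList = [] := by
        refine ReducedWord.toList_eq_nil_of_mem_of_range φ w' ?_
        rw [hw'prod, ← hcomm]
        exact ⟨rw.head, rfl⟩
      simp [w'] at this
    · -- commutes with everything in G
      intro x
      have := hz (of x)
      rw [hz', ← map_mul, ← map_mul] at this
      exact of_injective φ this
  · -- nonempty word: contradiction
    exfalso
    have hne : rw.toList ≠ [] := by rw [hcat]; simp
    set u₀ : ℤˣ := (rw.toList.head hne).1 with hu₀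
    have key : ∀ x : G, rw.head⁻¹ * (x * rw.head) ∈ toSubgroup A B (-u₀) := by
      intro x
      let w₂ : ReducedWord G A B :=
        ⟨x * rw.head, L ++ [(p.1, p.2 * x⁻¹)], by
          have hc := rw.chain
          rw [hcat, List.concat_eq_append] at hc
          rw [List.isChain_append]
          rw [List.isChain_append] at hc
          refine ⟨hc.1, List.isChain_singleton _, ?_⟩
          intro a ha y hy
          simp only [List.head?_cons, Option.mem_def, Option.some.injEq] at hy
          subst hy
          intro hmem
          exact hc.2.2 a ha p (by simp) hmem⟩
      have hprod : ReducedWord.prod φ rw = ReducedWord.prod φ w₂ := by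
        have h₁ : ReducedWord.prod φ w₂ = of x * ReducedWord.prod φ rw * (of x)⁻¹ := by
          simp only [ReducedWord.prod, w₂, hcat, List.concat_eq_append,
            List.map_append, List.prod_append, List.map_cons, List.map_nil, List.prod_cons,
            List.prod_nil, map_mul]
          simp [mul_assoc]
        rw [h₁, hzprod, ← hz (of x), mul_assoc, mul_inv_cancel, mul_one]
      have := (ReducedWord.map_fst_eq_and_of_prod_eq φ hprod).2 u₀ (by
        rw [List.head?_eq_head hne]
        simp [hu₀])
      simpa [mul_assoc] using this
    have htop : toSubgroup A B (-u₀) = ⊤ := by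
      rw [Subgroup.eq_top_iff']
      intro y
      have := key (rw.head * y * rw.head⁻¹)
      simpa [mul_assoc] using this
    rcases Int.units_eq_one_or u₀ with h | h <;> rw [h] at htop
    · exact hB (by simpa using htop)
    · exact hA (by simpa using htop)

end HNNCenter
open Subgroup

namespace HNNCenter

/-- homomorphism ℤ →* zpowers x -/
noncomputable def zpowHom {G : Type*} [Group G] (x : G) :
    Multiplicative ℤ →* zpowers x :=
  zpowersHom (zpowers x) ⟨x, mem_zpowers x⟩

lemma zpowHom_apply {G : Type*} [Group G] (x : G) (n : Multiplicative ℤ) :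
    (zpowHom x n : G) = x ^ (Multiplicative.toAdd n) := by
  simp [zpowHom]

noncomputable def zpowMulEquiv {G : Type*} [Group G] (x : G)
    (hx : ∀ n : ℤ, x ^ n = 1 → n = 0) :
    Multiplicative ℤ ≃* zpowers x := by
  refine MulEquiv.ofBijective (zpowHom x) ⟨?_, ?_⟩
  · intro a b hab
    have : (zpowHom x a : G) = (zpowHom x b : G) := by rw [hab]
    rw [zpowHom_apply, zpowHom_apply] at this
    have h2 : x ^ (Multiplicative.toAdd a - Multiplicative.toAdd b) = 1 := by
      rw [zpow_sub, this, mul_inv_cancel]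
    have := hx _ h2
    have : Multiplicative.toAdd a = Multiplicative.toAdd b := by omega
    exact Multiplicative.toAdd.injective this
  · rintro ⟨y, n, rfl⟩
    exact ⟨Multiplicative.ofAdd n, by ext; simp [zpowHom_apply]⟩

/-- An equivalence between infinite cyclic subgroups sending generator to generator. -/
noncomputable def zpowersMulEquiv {G : Type*} [Group G] (x y : G)
    (hx : ∀ n : ℤ, x ^ n = 1 → n = 0) (hy : ∀ n : ℤ, y ^ n = 1 → n = 0) :
    zpowers x ≃* zpowers y :=
  (zpowMulEquiv x hx).symm.trans (zpowMulEquiv y hy)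

lemma zpowersMulEquiv_apply {G : Type*} [Group G] (x y : G)
    (hx : ∀ n : ℤ, x ^ n = 1 → n = 0) (hy : ∀ n : ℤ, y ^ n = 1 → n = 0) :
    (zpowersMulEquiv x y hx hy ⟨x, mem_zpowers x⟩ : G) = y := by
  have h1 : (zpowMulEquiv x hx) (Multiplicative.ofAdd 1) = ⟨x, mem_zpowers x⟩ := by
    ext; exact (zpowHom_apply _ _).trans (by simp)
  have h2 : (zpowMulEquiv x hx).symm ⟨x, mem_zpowers x⟩ = Multiplicative.ofAdd 1 := by
    rw [← h1, MulEquiv.symm_apply_apply]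
  rw [zpowersMulEquiv, MulEquiv.trans_apply, h2]
  exact (zpowHom_apply _ _).trans (by simp)

end HNNCenter
open Subgroup HNNExtension

namespace HNNCenter

section FreeCenter

variable {X : Type*} [DecidableEq X] (x₀ : X)

abbrev Ydel (x₀ : X) : Type _ := {x : X // x ≠ x₀}

noncomputable abbrev FHNN (x₀ : X) : Type _ :=
  HNNExtension (FreeGroup (Ydel x₀)) ⊥ ⊥ (MulEquiv.refl _)

noncomputable def ffwd : FreeGroup X →* FHNN x₀ :=
  FreeGroup.lift (fun x => if h : x = x₀ then t else of (FreeGroup.of ⟨x, h⟩))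

noncomputable def fbwd : FHNN x₀ →* FreeGroup X :=
  HNNExtension.lift (FreeGroup.lift fun y => FreeGroup.of y.1) (FreeGroup.of x₀) (by
    rintro ⟨a, ha⟩
    rw [Subgroup.mem_bot] at ha
    subst ha
    simp)

lemma fbwd_ffwd : (fbwd x₀).comp (ffwd x₀) = MonoidHom.id _ := by
  apply FreeGroup.ext_hom
  intro a
  by_cases h : a = x₀
  · subst h
    simp [ffwd, fbwd]
  · simp [ffwd, fbwd, h]

lemma ffwd_fbwd : (ffwd x₀).comp (fbwd x₀) = MonoidHom.id _ := by
  apply HNNExtension.hom_ext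
  · apply FreeGroup.ext_hom
    intro y
    have h : (y : X) ≠ x₀ := y.2
    simp [ffwd, fbwd, h]
  · simp [ffwd, fbwd]

theorem freeGroup_center (x₁ : X) (hne : x₀ ≠ x₁) (z : FreeGroup X)
    (hz : ∀ x, z * x = x * z) : z = 1 := by
  have hbot : (⊥ : Subgroup (FreeGroup (Ydel x₀))) ≠ ⊤ := by
    have : FreeGroup.of (⟨x₁, Ne.symm hne⟩ : Ydel x₀) ≠ 1 := FreeGroup.of_ne_one _
    intro h
    have h2 : FreeGroup.of (⟨x₁, Ne.symm hne⟩ : Ydel x₀) ∈ (⊥ : Subgroup (FreeGroup (Ydel x₀))) := by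
      rw [h]; trivial
    rw [Subgroup.mem_bot] at h2
    exact this h2
  have hsurj : Function.Surjective (ffwd x₀) := fun q =>
    ⟨fbwd x₀ q, by rw [← MonoidHom.comp_apply, ffwd_fbwd]; rfl⟩
  have hinj : Function.Injective (ffwd x₀) := fun a b hab => by
    have := congrArg (fbwd x₀) hab
    rw [← MonoidHom.comp_apply, ← MonoidHom.comp_apply, fbwd_ffwd] at this
    exact this
  have hcent : ∀ q, ffwd x₀ z * q = q * ffwd x₀ z := by
    intro q
    obtain ⟨p, rfl⟩ := hsurj q
    rw [← map_mul, ← map_mul, hz]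
  obtain ⟨g, hg1, hg2, -⟩ := center_eq (MulEquiv.refl _) hbot hbot (ffwd x₀ z) hcent
  rw [Subgroup.mem_bot] at hg2
  subst hg2
  rw [map_one] at hg1
  apply hinj
  rw [hg1, map_one]

end FreeCenter

end HNNCenter
open Subgroup HNNExtension

namespace HNNCenter

lemma map_comm_prod {G H : Type*} [Group G] [Group H] (f : G →* H) {n : ℕ} (u v : Fin n → G) :
    f (List.ofFn fun i => ⁅u i, v i⁆).prod = (List.ofFn fun i => ⁅f (u i), f (v i)⁆).prod := by
  rw [map_list_prod, List.map_ofFn]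
  have : (⇑f ∘ fun i => ⁅u i, v i⁆) = fun i => ⁅f (u i), f (v i)⁆ := by
    funext i
    simp [map_commutatorElement]
  rw [this]

lemma prod_comm_group_eq_one {H : Type*} [CommGroup H] {n : ℕ} (u v : Fin n → H) :
    (List.ofFn fun i => ⁅u i, v i⁆).prod = 1 := by
  apply List.prod_eq_one
  intro x hx
  rw [List.mem_ofFn] at hx
  obtain ⟨i, rfl⟩ := hx
  exact commutatorElement_eq_one_iff_commute.2 (Commute.all _ _)

section Surface

variable (m : ℕ)

/-- index type for generators -/
abbrev I (m : ℕ) : Type := Fin (m + 2) × Bool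

abbrev a₀idx (m : ℕ) : I m := ((0 : Fin (m + 2)), true)

abbrev Ysub (m : ℕ) : Type := {p : I m // p ≠ a₀idx m}

abbrev FS (m : ℕ) : Type := FreeGroup (Ysub m)

/-- generators of the free group, with the one deleted generator sent to 1 -/
noncomputable def cgen (p : I m) : FS m :=
  if h : p = a₀idx m then 1 else FreeGroup.of ⟨p, h⟩

noncomputable def b1 : FS m := FreeGroup.of ⟨((0 : Fin (m + 2)), false), by simp⟩

lemma cgen_a₀ : cgen m (a₀idx m) = 1 := by simp [cgen]

lemma cgen_b1 : cgen m ((0 : Fin (m + 2)), false) = b1 m := by simp [cgen, b1]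

noncomputable def ws : FS m := (List.ofFn fun i : Fin (m + 2) => ⁅cgen m (i, true), cgen m (i, false)⁆).prod

/-- counting homomorphism for a given generator -/
noncomputable def cnt (y₀ : Ysub m) : FS m →* Multiplicative ℤ :=
  FreeGroup.lift (fun y => Multiplicative.ofAdd (if y = y₀ then (1 : ℤ) else 0))

lemma cnt_ws (y₀ : Ysub m) : cnt m y₀ (ws m) = 1 := by
  rw [ws, map_comm_prod, prod_comm_group_eq_one]

lemma cnt_b1 : cnt m ⟨((0 : Fin (m+2)), false), by simp⟩ (b1 m) = Multiplicative.ofAdd 1 := by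
  rw [b1, cnt, FreeGroup.lift_apply_of, if_pos rfl]

lemma b1_inf : ∀ n : ℤ, (b1 m) ^ n = 1 → n = 0 := by
  intro n h
  have h3 : (Multiplicative.ofAdd (1 : ℤ)) ^ n = 1 := by
    rw [← cnt_b1 m, ← map_zpow, h, map_one]
  have h4 := congrArg Multiplicative.toAdd h3
  simp only [toAdd_zpow, toAdd_ofAdd, toAdd_one,
    smul_eq_mul, mul_one] at h4
  exact h4

lemma wb1_inf : ∀ n : ℤ, ((ws m)⁻¹ * b1 m) ^ n = 1 → n = 0 := by
  intro n h
  have hcw : cnt m ⟨((0 : Fin (m+2)), false), by simp⟩ ((ws m)⁻¹ * b1 m)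
      = Multiplicative.ofAdd (1 : ℤ) := by
    rw [map_mul, map_inv, cnt_ws, cnt_b1, inv_one, one_mul]
  have h3 : (Multiplicative.ofAdd (1 : ℤ)) ^ n = 1 := by
    rw [← hcw, ← map_zpow, h, map_one]
  have h4 := congrArg Multiplicative.toAdd h3
  simp only [toAdd_zpow, toAdd_ofAdd, toAdd_one,
    smul_eq_mul, mul_one] at h4
  exact h4

noncomputable def φS : (zpowers (b1 m) : Subgroup (FS m)) ≃* zpowers ((ws m)⁻¹ * b1 m) :=
  zpowersMulEquiv _ _ (b1_inf m) (wb1_inf m)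

lemma φS_b1 : (φS m ⟨b1 m, mem_zpowers _⟩ : FS m) = (ws m)⁻¹ * b1 m :=
  zpowersMulEquiv_apply _ _ _ _

end Surface

end HNNCenter
section SurfaceIso

open Subgroup HNNExtension

namespace HNNCenter

variable (m : ℕ)

abbrev relS : FreeGroup (I m) :=
  (List.ofFn fun i : Fin (m + 2) =>
    ⁅FreeGroup.of (i, true), FreeGroup.of (i, false)⁆).prod

abbrev relsS : Set (FreeGroup (I m)) := {relS m}

abbrev SG : Type := PresentedGroup (relsS m)

abbrev SHNN : Type :=
  HNNExtension (FS m) (zpowers (b1 m)) (zpowers ((ws m)⁻¹ * b1 m)) (φS m)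

noncomputable def fS (p : I m) : SHNN m :=
  if h : p = a₀idx m then t else of (FreeGroup.of ⟨p, h⟩)

lemma fS_ne (p : I m) (h : p ≠ a₀idx m) : fS m p = of (cgen m p) := by
  rw [fS, dif_neg h, cgen, dif_neg h]

lemma fS_a₀ : fS m (a₀idx m) = t := by rw [fS, dif_pos rfl]

lemma succ_ne_a₀ (j : Fin (m + 1)) (b : Bool) : (j.succ, b) ≠ a₀idx m := by
  intro h
  rw [Prod.ext_iff] at h
  exact Fin.succ_ne_zero j h.1

lemma t_conj_b1 : (t : SHNN m) * of (b1 m) = of ((ws m)⁻¹ * b1 m) * t := by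
  have := t_mul_of (φ := φS m) ⟨b1 m, mem_zpowers _⟩
  rwa [φS_b1] at this

lemma ws_eq_tail : ws m =
    (List.ofFn fun j : Fin (m + 1) => ⁅cgen m (j.succ, true), cgen m (j.succ, false)⁆).prod := by
  rw [ws, List.ofFn_succ, List.prod_cons, cgen_a₀]
  simp

lemma hrelS_lift : FreeGroup.lift (fS m) (relS m) = 1 := by
  have h1 : FreeGroup.lift (fS m) (relS m) =
      (List.ofFn fun i : Fin (m + 2) => ⁅fS m (i, true), fS m (i, false)⁆).prod := by
    rw [relS, map_comm_prod]
    simp only [FreeGroup.lift_apply_of]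
  rw [h1, List.ofFn_succ, List.prod_cons]
  have h2 : (fun j : Fin (m + 1) => ⁅fS m (j.succ, true), fS m (j.succ, false)⁆)
      = fun j => ⁅(of (cgen m (j.succ, true)) : SHNN m), of (cgen m (j.succ, false))⁆ := by
    funext j
    rw [fS_ne m _ (succ_ne_a₀ m j true), fS_ne m _ (succ_ne_a₀ m j false)]
  rw [h2]
  have h3 : (of (ws m) : SHNN m) = (List.ofFn fun j : Fin (m+1) =>
      ⁅(of (cgen m (j.succ, true)) : SHNN m), of (cgen m (j.succ, false))⁆).prod := by
    rw [congrArg (HNNExtension.of (φ := φS m)) (ws_eq_tail m)]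
    exact map_comm_prod _ _ _
  rw [← h3, fS_a₀, fS_ne m _ (by simp [a₀idx]), cgen_b1]
  rw [commutatorElement_def]
  rw [mul_assoc t, mul_assoc t, ← mul_assoc, ← mul_assoc, t_conj_b1]
  rw [mul_inv_cancel_right,
    ← map_inv, ← map_mul, ← map_mul, mul_inv_cancel_right, inv_mul_cancel, map_one]

noncomputable def sfwd : SG m →* SHNN m :=
  PresentedGroup.toGroup (f := fS m) (by
    rintro r hr
    rw [Set.mem_singleton_iff] at hr
    subst hr
    exact hrelS_lift m)

noncomputable def jS : FS m →* SG m :=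
  FreeGroup.lift (fun y : Ysub m => (PresentedGroup.of y.1 : SG m))

noncomputable def xS : SG m := PresentedGroup.of (a₀idx m)

lemma jS_cgen (p : I m) (h : p ≠ a₀idx m) : jS m (cgen m p) = PresentedGroup.of p := by
  rw [cgen, dif_neg h, jS, FreeGroup.lift_apply_of]

lemma jS_b1 : jS m (b1 m) = PresentedGroup.of ((0 : Fin (m+2)), false) := by
  rw [b1, jS, FreeGroup.lift_apply_of]

lemma hrelSG : (List.ofFn fun i : Fin (m + 2) =>
    ⁅(PresentedGroup.of (i, true) : SG m), PresentedGroup.of (i, false)⁆).prod = (1 : SG m) := by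
  have hmem : relS m ∈ Subgroup.normalClosure (relsS m) :=
    Subgroup.subset_normalClosure (Set.mem_singleton _)
  have h0 : PresentedGroup.mk (relsS m) (relS m) = 1 :=
    (QuotientGroup.eq_one_iff (relS m)).2 hmem
  have h1 : PresentedGroup.mk (relsS m) (relS m) =
      (List.ofFn fun i : Fin (m + 2) =>
        ⁅(PresentedGroup.of (i, true) : SG m), PresentedGroup.of (i, false)⁆).prod := by
    rw [relS, map_comm_prod]
    rfl
  rw [← h1, h0]

lemma jS_ws : jS m (ws m) = (List.ofFn fun j : Fin (m + 1) =>
    ⁅(PresentedGroup.of (j.succ, true) : SG m), PresentedGroup.of (j.succ, false)⁆).prod := by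
  rw [ws_eq_tail, map_comm_prod]
  have h2 : (fun j : Fin (m+1) => ⁅jS m (cgen m (j.succ, true)), jS m (cgen m (j.succ, false))⁆)
      = fun j => ⁅(PresentedGroup.of (j.succ, true) : SG m), PresentedGroup.of (j.succ, false)⁆ := by
    funext j
    rw [jS_cgen m _ (succ_ne_a₀ m j true), jS_cgen m _ (succ_ne_a₀ m j false)]
  rw [h2]

lemma keyS : xS m * jS m (b1 m) * (xS m)⁻¹ = jS m ((ws m)⁻¹ * b1 m) := by
  have h := hrelSG m
  rw [List.ofFn_succ, List.prod_cons] at h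
  have h2 : ⁅(PresentedGroup.of ((0 : Fin (m+2)), true) : SG m),
      PresentedGroup.of ((0 : Fin (m+2)), false)⁆ = (jS m (ws m))⁻¹ := by
    rw [jS_ws, eq_inv_iff_mul_eq_one]
    exact h
  have hxSdef : xS m = PresentedGroup.of ((0 : Fin (m+2)), true) := rfl
  rw [map_mul, map_inv, hxSdef, jS_b1, ← h2, commutatorElement_def]
  group

lemma hx_cond : ∀ a : zpowers (b1 m),
    xS m * jS m ↑a = jS m ↑(φS m a) * xS m := by
  intro a
  obtain ⟨k, hk⟩ := mem_zpowers_iff.1 a.2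
  have ha : a = (⟨b1 m, mem_zpowers _⟩ : zpowers (b1 m)) ^ k := by
    apply Subtype.ext
    rw [SubgroupClass.coe_zpow]
    exact hk.symm
  subst ha
  rw [map_zpow, SubgroupClass.coe_zpow, SubgroupClass.coe_zpow, φS_b1]
  have hb : ((⟨b1 m, mem_zpowers _⟩ : zpowers (b1 m)) : FS m) = b1 m := rfl
  rw [hb, map_zpow, map_zpow]
  have hconj : (xS m * jS m (b1 m) * (xS m)⁻¹) ^ k
      = xS m * (jS m (b1 m)) ^ k * (xS m)⁻¹ := by
    rw [conj_zpow]
  rw [keyS] at hconj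
  rw [hconj]
  group

noncomputable def sbwd : SHNN m →* SG m :=
  HNNExtension.lift (jS m) (xS m) (hx_cond m)

lemma sbwd_sfwd : (sbwd m).comp (sfwd m) = MonoidHom.id (SG m) := by
  apply PresentedGroup.ext
  intro p
  simp only [MonoidHom.comp_apply, MonoidHom.id_apply]
  show sbwd m (sfwd m (PresentedGroup.of p)) = PresentedGroup.of p
  rw [sfwd, PresentedGroup.toGroup.of]
  by_cases h : p = a₀idx m
  · subst h
    rw [fS_a₀, sbwd, HNNExtension.lift_t]
    rfl
  · rw [fS, dif_neg h, sbwd, HNNExtension.lift_of, jS, FreeGroup.lift_apply_of]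

lemma sfwd_sbwd : (sfwd m).comp (sbwd m) = MonoidHom.id (SHNN m) := by
  apply HNNExtension.hom_ext
  · apply FreeGroup.ext_hom
    intro y
    simp only [MonoidHom.comp_apply, MonoidHom.id_apply]
    rw [sbwd, HNNExtension.lift_of, jS, FreeGroup.lift_apply_of]
    rw [sfwd, PresentedGroup.toGroup.of, fS, dif_neg y.2]
  · simp only [MonoidHom.comp_apply, MonoidHom.id_apply]
    rw [sbwd, HNNExtension.lift_t]
    show PresentedGroup.toGroup _ (PresentedGroup.of (a₀idx m)) = t
    rw [PresentedGroup.toGroup.of, fS_a₀]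

theorem surface_center (z : SG m) (hz : ∀ x, z * x = x * z) : z = 1 := by
  have h1t : ((1 : Fin (m+2)), true) ≠ a₀idx m := by
    simp [a₀idx, Prod.ext_iff, Fin.ext_iff]
  set y₁ : Ysub m := ⟨((1 : Fin (m+2)), true), h1t⟩ with hy₁
  have hcnt_a2 : cnt m y₁ (FreeGroup.of y₁) = Multiplicative.ofAdd 1 := by
    rw [cnt, FreeGroup.lift_apply_of, if_pos rfl]
  have hcnt_b1 : cnt m y₁ (b1 m) = 1 := by
    rw [b1, cnt, FreeGroup.lift_apply_of, if_neg (by simp [hy₁])]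
    rfl
  have hofadd : (Multiplicative.ofAdd (1 : ℤ)) ≠ 1 := by
    intro h
    have := congrArg Multiplicative.toAdd h
    simpa using this
  have hA : zpowers (b1 m) ≠ ⊤ := by
    intro h
    have hmem : FreeGroup.of y₁ ∈ zpowers (b1 m) := by rw [h]; trivial
    obtain ⟨k, hk⟩ := mem_zpowers_iff.1 hmem
    have := congrArg (cnt m y₁) hk
    rw [map_zpow, hcnt_b1, one_zpow, hcnt_a2] at this
    exact hofadd this.symm
  have hB : zpowers ((ws m)⁻¹ * b1 m) ≠ ⊤ := by
    intro h
    have hmem : FreeGroup.of y₁ ∈ zpowers ((ws m)⁻¹ * b1 m) := by rw [h]; trivial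
    obtain ⟨k, hk⟩ := mem_zpowers_iff.1 hmem
    have := congrArg (cnt m y₁) hk
    rw [map_zpow, map_mul, map_inv, cnt_ws, hcnt_b1, inv_one, one_mul, one_zpow,
      hcnt_a2] at this
    exact hofadd this.symm
  have hsurj : Function.Surjective (sfwd m) := fun q =>
    ⟨sbwd m q, by rw [← MonoidHom.comp_apply, sfwd_sbwd]; rfl⟩
  have hinj : Function.Injective (sfwd m) := fun a b hab => by
    have := congrArg (sbwd m) hab
    rw [← MonoidHom.comp_apply, ← MonoidHom.comp_apply, sbwd_sfwd] at this
    exact this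
  have hcent : ∀ q, sfwd m z * q = q * sfwd m z := by
    intro q
    obtain ⟨p, rfl⟩ := hsurj q
    rw [← map_mul, ← map_mul, hz]
  obtain ⟨g, hg1, -, hg3⟩ := center_eq (φS m) hA hB (sfwd m z) hcent
  have hg0 : g = 1 := by
    refine freeGroup_center (X := Ysub m) ⟨((0 : Fin (m+2)), false), by simp [a₀idx]⟩
      y₁ ?_ g hg3
    · intro h
      rw [Subtype.ext_iff] at h
      simp [hy₁, Prod.ext_iff] at h
  apply hinj
  rw [hg1, hg0, map_one, map_one]

end HNNCenter
end SurfaceIso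



def fixedSubgroup {G : Type*} [Group G] (φ : G →* G) : Subgroup G where
  carrier := {x | φ x = x}
  one_mem' := by simp
  mul_mem' := by
    intro a b ha hb
    simp only [Set.mem_setOf_eq, map_mul] at *
    rw [ha, hb]
  inv_mem' := by
    intro a ha
    simp only [Set.mem_setOf_eq, map_inv] at *
    rw [ha]

open scoped commutatorElement

/-- The surface group π₁(Σ_g) = ⟨a₁,b₁,…,a_g,b_g ∣ [a₁,b₁]⋯[a_g,b_g] = 1⟩,
with generators `(i, true) = aᵢ` and `(i, false) = bᵢ`. -/
abbrev SurfaceGroup (g : ℕ) : Type :=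
  PresentedGroup
    ({(List.ofFn fun i : Fin g =>
        ⁅FreeGroup.of (i, true), FreeGroup.of (i, false)⁆).prod} :
      Set (FreeGroup (Fin g × Bool)))

/-- The rank of a group: the minimal cardinality of a generating set. -/
noncomputable def grpRank (G : Type*) [Group G] : Cardinal :=
  ⨅ S : {S : Set G // Subgroup.closure S = ⊤}, Cardinal.mk S.1

theorem stmt9 (g k : ℕ) (hg : 2 ≤ g) (hk : 1 ≤ k) (H : Type) [Group H]
    (hH : Nonempty (H ≃* SurfaceGroup g) ∨ Nonempty (H ≃* FreeGroup (Fin g)))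
    (φ : (H × Multiplicative (Fin k → ℤ)) ≃* (H × Multiplicative (Fin k → ℤ))) :
    ∃ (α : H ≃* H) (L : Multiplicative (Fin k → ℤ) ≃* Multiplicative (Fin k → ℤ))
      (γ : H →* Multiplicative (Fin k → ℤ)),
      ∀ (u : H) (v : Multiplicative (Fin k → ℤ)),
        φ (u, v) = (α u, γ u * L v) := by
  obtain ⟨m, rfl⟩ : ∃ m, g = m + 2 := ⟨g - 2, by omega⟩
  -- H has trivial center
  have hcenter : ∀ z : H, (∀ x, z * x = x * z) → z = 1 := by
    rcases hH with ⟨⟨e⟩⟩ | ⟨⟨e⟩⟩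
    · intro z hz
      have hez : e z = 1 := by
        apply HNNCenter.surface_center m (e z)
        intro x
        have : x = e (e.symm x) := (e.apply_symm_apply x).symm
        rw [this, ← map_mul, ← map_mul, hz]
      have := congrArg e.symm hez
      rwa [e.symm_apply_apply, map_one] at this
    · intro z hz
      have hez : e z = 1 := by
        apply HNNCenter.freeGroup_center (X := Fin (m + 2)) 0 1 (by simp [Fin.ext_iff]) (e z)
        intro x
        have : x = e (e.symm x) := (e.apply_symm_apply x).symm
        rw [this, ← map_mul, ← map_mul, hz]
      have := congrArg e.symm hez
      rwa [e.symm_apply_apply, map_one] at this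
  set A' := Multiplicative (Fin k → ℤ) with hA'
  -- (1, v) is central
  have hcent1 : ∀ (v : A') (pq : H × A'), (1, v) * pq = pq * (1, v) := by
    intro v pq
    ext
    · simp
    · exact congrArg (fun w : A' => Multiplicative.toAdd w _) (mul_comm v pq.2)
  have hfix : ∀ v : A', (φ (1, v)).1 = 1 := by
    intro v
    apply hcenter
    intro x
    have hcent2 : φ (1, v) * (x, 1) = (x, 1) * φ (1, v) := by
      rw [← φ.apply_symm_apply (x, 1), ← map_mul, ← map_mul, hcent1]
    have h1 := congrArg Prod.fst hcent2
    simpa using h1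
  have hfix' : ∀ v : A', (φ.symm (1, v)).1 = 1 := by
    intro v
    apply hcenter
    intro x
    have hcent2 : φ.symm (1, v) * (x, 1) = (x, 1) * φ.symm (1, v) := by
      rw [← φ.symm_apply_apply (x, 1), ← map_mul, ← map_mul]
      congr 1
      rw [← hcent1 v (φ (x,1))]
    have h1 := congrArg Prod.fst hcent2
    simpa using h1
  let α' : H →* H := (MonoidHom.fst H A').comp (φ.toMonoidHom.comp (MonoidHom.inl H A'))
  let β' : H →* H := (MonoidHom.fst H A').comp (φ.symm.toMonoidHom.comp (MonoidHom.inl H A'))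
  let γ : H →* A' := (MonoidHom.snd H A').comp (φ.toMonoidHom.comp (MonoidHom.inl H A'))
  let L' : A' →* A' := (MonoidHom.snd H A').comp (φ.toMonoidHom.comp (MonoidHom.inr H A'))
  let L'' : A' →* A' := (MonoidHom.snd H A').comp (φ.symm.toMonoidHom.comp (MonoidHom.inr H A'))
  have hφ1 : ∀ u : H, φ (u, 1) = (α' u, γ u) := fun u => rfl
  have hφ1' : ∀ u : H, φ.symm (u, 1) = (β' u, (MonoidHom.snd H A').comp
      (φ.symm.toMonoidHom.comp (MonoidHom.inl H A')) u) := fun u => rfl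
  have hφv : ∀ v : A', φ (1, v) = (1, L' v) := fun v => Prod.ext (hfix v) rfl
  have hφv' : ∀ v : A', φ.symm (1, v) = (1, L'' v) := fun v => Prod.ext (hfix' v) rfl
  have hsplit : ∀ (u : H) (v : A'), (u, v) = ((u, 1) : H × A') * (1, v) := by
    intro u v
    ext <;> simp
  have hβα : ∀ u : H, β' (α' u) = u := by
    intro u
    have h := φ.symm_apply_apply (u, 1)
    rw [hφ1 u, hsplit (α' u) (γ u), map_mul, hφv' (γ u)] at h
    have h1 := congrArg Prod.fst h
    simp only [Prod.fst_mul, Prod.snd_mul] at h1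
    have : (φ.symm (α' u, 1)).1 = β' (α' u) := rfl
    rw [this] at h1
    simpa using h1
  have hαβ : ∀ u : H, α' (β' u) = u := by
    intro u
    have h := φ.apply_symm_apply (u, 1)
    rw [hφ1' u, hsplit (β' u) _, map_mul, hφv _] at h
    have h1 := congrArg Prod.fst h
    simp only [Prod.fst_mul, Prod.snd_mul] at h1
    have : (φ (β' u, 1)).1 = α' (β' u) := rfl
    rw [this] at h1
    simpa using h1
  have hL : ∀ v : A', L'' (L' v) = v := by
    intro v
    have h := φ.symm_apply_apply (1, v)
    rw [hφv v, hφv' (L' v)] at h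
    exact congrArg Prod.snd h
  have hL' : ∀ v : A', L' (L'' v) = v := by
    intro v
    have h := φ.apply_symm_apply (1, v)
    rw [hφv' v, hφv (L'' v)] at h
    exact congrArg Prod.snd h
  refine ⟨⟨⟨α', β', hβα, hαβ⟩, map_mul α'⟩, ⟨⟨L', L'', hL, hL'⟩, map_mul L'⟩, γ, ?_⟩
  intro u v
  rw [hsplit u v, map_mul, hφ1 u, hφv v]
  ext
  · simp
  · rfl
end

section
/- Let g ≥ 2. For every integer t ≥ 0, both F_t and F_t × ℤ are aut-fixed up to isomorphism in F_g × ℤ²: there exist automorphisms φ_t and ψ_t of F_g × ℤ² with Fix φ_t ≅ F_t and Fix ψ_t ≅ F_t × ℤ. -/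
open scoped commutatorElement

set_option linter.unusedSectionVars false

open FreeGroup

namespace Aux

lemma list_map_eq_self {γ : Type*} {f : γ → γ} : ∀ {l : List γ}, l.map f = l → ∀ x ∈ l, f x = x := by
  intro l
  induction l with
  | nil => intro _ x hx; cases hx
  | cons a t ih =>
    intro h x hx
    rw [List.map_cons, List.cons_eq_cons] at h
    rw [List.mem_cons] at hx
    rcases hx with rfl | hx
    · exact h.1
    · exact ih h.2 x hx

variable {β : Type*} [DecidableEq β]

/-- letter transform: keep letters satisfying `p`, invert others -/
def tau (p : β → Prop) [DecidablePred p] : β × Bool → β × Bool :=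
  fun l => if p l.1 then l else (l.1, !l.2)

/-- the endomorphism inverting the generators not satisfying `p` -/
def flip (p : β → Prop) [DecidablePred p] : FreeGroup β →* FreeGroup β :=
  FreeGroup.lift fun i => if p i then FreeGroup.of i else (FreeGroup.of i)⁻¹

variable (p : β → Prop) [DecidablePred p]

omit [DecidableEq β] in
lemma tau_fst (l : β × Bool) : (tau p l).1 = l.1 := by
  unfold tau; split <;> rfl

omit [DecidableEq β] in
lemma tau_cancel_iff (l m : β × Bool) :
    ((tau p l).1 = (tau p m).1 ∧ (tau p l).2 = !(tau p m).2) ↔ (l.1 = m.1 ∧ l.2 = !m.2) := by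
  rcases l with ⟨a, b⟩; rcases m with ⟨c, d⟩
  constructor
  · rintro ⟨h1, h2⟩
    rw [tau_fst, tau_fst] at h1
    obtain rfl : a = c := h1
    refine ⟨rfl, ?_⟩
    unfold tau at h2
    by_cases hp : p a
    · simpa [hp] using h2
    · simp only [hp, if_false] at h2
      simpa using h2
  · rintro ⟨h1, h2⟩
    obtain rfl : a = c := h1
    obtain rfl : b = !d := h2
    refine ⟨by rw [tau_fst, tau_fst], ?_⟩
    unfold tau
    by_cases hp : p a <;> simp [hp]

lemma flip_mk (L : List (β × Bool)) : flip p (mk L) = mk (L.map (tau p)) := by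
  induction L with
  | nil => simp [one_eq_mk.symm, flip]
  | cons l L ih =>
    have h1 : mk (l :: L) = mk [l] * mk L := by rw [mul_mk]; rfl
    rw [h1, (flip p).map_mul, ih,
      List.map_cons, show (tau p l :: L.map (tau p)) = [tau p l] ++ L.map (tau p) from rfl,
      ← mul_mk]
    congr 1
    rcases l with ⟨a, b⟩
    cases b
    · have h2 : (mk [(a, false)] : FreeGroup β) = (of a)⁻¹ := by
        rw [show (of a : FreeGroup β) = mk [(a, true)] from rfl, inv_mk]; rfl
      rw [h2, (flip p).map_inv]
      unfold flip tau
      by_cases h : p a <;> simp [h]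
      · rw [show (of a : FreeGroup β) = mk [(a, true)] from rfl, inv_mk]; rfl
      · rw [show (of a : FreeGroup β) = mk [(a, true)] from rfl]
    · have h2 : (mk [(a, true)] : FreeGroup β) = of a := rfl
      rw [h2]
      unfold flip tau
      by_cases h : p a <;> simp [h]
      · rfl
      · rw [show (of a : FreeGroup β) = mk [(a, true)] from rfl, inv_mk]; rfl

lemma reduce_map_tau (L : List (β × Bool)) :
    reduce (L.map (tau p)) = (reduce L).map (tau p) := by
  induction L with
  | nil => rfl
  | cons l L ih =>
    show reduce (tau p l :: L.map (tau p)) = _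
    rw [show reduce (l :: L) = List.casesOn (reduce L) [l] (fun hd2 tl2 =>
      if l.1 = hd2.1 ∧ l.2 = !hd2.2 then tl2 else l :: hd2 :: tl2) from rfl]
    rw [show reduce (tau p l :: L.map (tau p)) = List.casesOn (reduce (L.map (tau p))) [tau p l]
      (fun hd2 tl2 =>
        if (tau p l).1 = hd2.1 ∧ (tau p l).2 = !hd2.2 then tl2 else tau p l :: hd2 :: tl2) from rfl]
    rw [ih]
    cases hL : reduce L with
    | nil => rfl
    | cons m M =>
      simp only [List.map_cons]
      by_cases h : l.1 = m.1 ∧ l.2 = !m.2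
      · rw [if_pos ((tau_cancel_iff p l m).2 h), if_pos h]
      · rw [if_neg (fun hc => h ((tau_cancel_iff p l m).1 hc)), if_neg h]
        rfl

lemma toWord_flip (x : FreeGroup β) : (flip p x).toWord = x.toWord.map (tau p) := by
  conv_lhs => rw [← mk_toWord (x := x)]
  rw [flip_mk, toWord_mk, reduce_map_tau, reduce_toWord]

lemma flip_fixed_iff (x : FreeGroup β) : flip p x = x ↔ ∀ l ∈ x.toWord, p l.1 := by
  constructor
  · intro h l hl
    have h2 : x.toWord.map (tau p) = x.toWord := by
      rw [← toWord_flip, h]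
    have h3 := list_map_eq_self h2 l hl
    by_contra hp
    unfold tau at h3
    rw [if_neg hp] at h3
    have : (!l.2) = l.2 := congrArg Prod.snd h3
    simp at this
  · intro h
    apply toWord_injective
    rw [toWord_flip]
    have : x.toWord.map (tau p) = x.toWord.map id :=
      List.map_congr_left (fun l hl => by unfold tau; rw [if_pos (h l hl)]; rfl)
    rw [this, List.map_id]

lemma flip_flip : (flip p).comp (flip p) = MonoidHom.id _ := by
  apply FreeGroup.ext_hom
  intro a
  simp only [MonoidHom.comp_apply, MonoidHom.id_apply]
  unfold flip
  by_cases h : p a <;> simp [h]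

/-- `flip` as an automorphism -/
def flipEquiv : FreeGroup β ≃* FreeGroup β where
  toFun := flip p
  invFun := flip p
  left_inv := fun x => by
    rw [← MonoidHom.comp_apply, flip_flip, MonoidHom.id_apply]
  right_inv := fun x => by
    rw [← MonoidHom.comp_apply, flip_flip, MonoidHom.id_apply]
  map_mul' := (flip p).map_mul

@[simp] lemma flipEquiv_apply (x : FreeGroup β) : flipEquiv p x = flip p x := rfl

end Aux

namespace Aux2
open FreeGroup SemidirectProduct Multiplicative

variable (k : ℕ)

abbrev F := FreeGroup (Fin (k+1))

def Y : F k := of (Fin.last k)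

lemma of_mk_congr {n a c : ℕ} (ha : a < n+1) (hc : c < n+1) (h : a = c) :
    (of (⟨a, ha⟩ : Fin (n+1)) : FreeGroup (Fin (n+1))) = of ⟨c, hc⟩ := by subst h; rfl

/-- exponent sum of the first generator -/
def sig : FreeGroup (Fin 2) →* Multiplicative ℤ :=
  FreeGroup.lift fun i => if (i : ℕ) = 0 then ofAdd (1 : ℤ) else 1

def a : FreeGroup (Fin 2) := of 0
def b : FreeGroup (Fin 2) := of 1

lemma sig_a : sig a = ofAdd 1 := by simp [sig, a]
lemma sig_b : sig b = 1 := by simp [sig, b]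

def αf : F k →* F k :=
  FreeGroup.lift fun i =>
    if h : (i : ℕ) < k then
      (if h2 : (i : ℕ) + 1 < k then of (⟨(i : ℕ) + 1, by omega⟩ : Fin (k+1))
       else Y k * of (⟨0, by omega⟩ : Fin (k+1)) * (Y k)⁻¹)
    else Y k

def αg : F k →* F k :=
  FreeGroup.lift fun i =>
    if h : (i : ℕ) < k then
      (if h2 : 0 < (i : ℕ) then of (⟨(i : ℕ) - 1, by omega⟩ : Fin (k+1))
       else (Y k)⁻¹ * of (⟨k - 1, by omega⟩ : Fin (k+1)) * Y k)
    else Y k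

lemma αf_of_mid (i : ℕ) (h : i + 1 < k) :
    αf k (of (⟨i, by omega⟩ : Fin (k+1))) = of (⟨i + 1, by omega⟩ : Fin (k+1)) := by
  simp only [αf, FreeGroup.lift_apply_of]
  rw [dif_pos (show i < k by omega), dif_pos (show i + 1 < k from h)]

lemma αf_of_top (h : 0 < k) :
    αf k (of (⟨k - 1, by omega⟩ : Fin (k+1))) =
      Y k * of (⟨0, by omega⟩ : Fin (k+1)) * (Y k)⁻¹ := by
  simp only [αf, FreeGroup.lift_apply_of]
  rw [dif_pos (show k - 1 < k by omega), dif_neg (show ¬(k - 1 + 1 < k) by omega)]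

lemma αf_Y : αf k (Y k) = Y k := by
  simp only [αf, Y, FreeGroup.lift_apply_of]
  rw [dif_neg (by simp : ¬ ((Fin.last k : ℕ) < k))]

lemma αg_of_mid (i : ℕ) (h : i + 1 < k) :
    αg k (of (⟨i + 1, by omega⟩ : Fin (k+1))) = of (⟨i, by omega⟩ : Fin (k+1)) := by
  simp only [αg, FreeGroup.lift_apply_of]
  rw [dif_pos (show i + 1 < k from h), dif_pos (show 0 < i + 1 by omega)]
  exact of_mk_congr _ _ (by omega)

lemma αg_of_zero (h : 0 < k) :
    αg k (of (⟨0, by omega⟩ : Fin (k+1))) =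
      (Y k)⁻¹ * of (⟨k - 1, by omega⟩ : Fin (k+1)) * Y k := by
  simp only [αg, FreeGroup.lift_apply_of]
  rw [dif_pos (show 0 < k from h), dif_neg (show ¬(0 < 0) by omega)]

lemma αg_Y : αg k (Y k) = Y k := by
  simp only [αg, Y, FreeGroup.lift_apply_of]
  rw [dif_neg (by simp : ¬ ((Fin.last k : ℕ) < k))]

lemma αgf : (αg k).comp (αf k) = MonoidHom.id _ := by
  apply FreeGroup.ext_hom
  rintro ⟨v, hv⟩
  simp only [MonoidHom.comp_apply, MonoidHom.id_apply]
  by_cases h1 : v < k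
  · by_cases h2 : v + 1 < k
    · rw [αf_of_mid k v h2, αg_of_mid k v h2]
    · have hv1 : v = k - 1 := by omega
      subst hv1
      rw [αf_of_top k (by omega)]
      rw [(αg k).map_mul, (αg k).map_mul, (αg k).map_inv]
      rw [αg_Y, αg_of_zero k (by omega)]
      group
  · have : (⟨v, hv⟩ : Fin (k+1)) = Fin.last k := by
      apply Fin.ext; simp; omega
    rw [this, ← Y, αf_Y, αg_Y]

lemma αfg : (αf k).comp (αg k) = MonoidHom.id _ := by
  apply FreeGroup.ext_hom
  rintro ⟨v, hv⟩
  simp only [MonoidHom.comp_apply, MonoidHom.id_apply]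
  by_cases h1 : v < k
  · by_cases h2 : 0 < v
    · have h3 : (v-1) + 1 < k := by omega
      have e1 : (of (⟨v, hv⟩ : Fin (k+1)) : F k) = of ⟨(v-1)+1, by omega⟩ :=
        of_mk_congr _ _ (by omega)
      rw [e1, αg_of_mid k (v-1) h3, αf_of_mid k (v-1) h3]
    · have hv0 : v = 0 := by omega
      subst hv0
      rw [αg_of_zero k (by omega)]
      rw [(αf k).map_mul, (αf k).map_mul, (αf k).map_inv]
      rw [αf_Y, αf_of_top k (by omega)]
      group
  · have : (⟨v, hv⟩ : Fin (k+1)) = Fin.last k := by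
      apply Fin.ext; simp; omega
    rw [this, ← Y, αg_Y, αf_Y]

/-- the twisting automorphism of `F k` -/
def αA : MulAut (F k) where
  toFun := αf k
  invFun := αg k
  left_inv := fun x => by rw [← MonoidHom.comp_apply, αgf, MonoidHom.id_apply]
  right_inv := fun x => by rw [← MonoidHom.comp_apply, αfg, MonoidHom.id_apply]
  map_mul' := (αf k).map_mul

lemma αA_apply (x : F k) : αA k x = αf k x := rfl

lemma αA_inv_apply (x : F k) : (αA k)⁻¹ x = αg k x := rfl

lemma αA_pow_of (j i : ℕ) (hij : i + j < k) :
    ((αA k)^j) (of (⟨i, by omega⟩ : Fin (k+1))) = of (⟨i + j, by omega⟩ : Fin (k+1)) := by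
  induction j generalizing i with
  | zero => simp
  | succ j ih =>
    rw [pow_succ, MulAut.mul_apply]
    rw [show (αA k) (of (⟨i, by omega⟩ : Fin (k+1))) = αf k (of (⟨i, by omega⟩ : Fin (k+1))) from
      rfl]
    rw [αf_of_mid k i (by omega)]
    rw [ih (i+1) (by omega)]
    exact of_mk_congr _ _ (by omega)

lemma αA_pow_Y (j : ℕ) : ((αA k)^j) (Y k) = Y k := by
  induction j with
  | zero => simp
  | succ j ih => rw [pow_succ, MulAut.mul_apply, αA_apply, αf_Y, ih]

lemma αA_pow_k (z : F k) (hk : 0 < k) : ((αA k)^k) z = Y k * z * (Y k)⁻¹ := by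
  have h : ∀ i : Fin (k+1), ((αA k)^k) (of i) = Y k * of i * (Y k)⁻¹ := by
    rintro ⟨v, hv⟩
    by_cases h1 : v < k
    · have e1 : ((αA k)^v * (αA k)^1 * (αA k)^(k-1-v) : MulAut (F k)) = (αA k)^k := by
        rw [← pow_add, ← pow_add]
        congr 1
        omega
      rw [← e1, MulAut.mul_apply, MulAut.mul_apply]
      have e2 : ((αA k)^(k-1-v)) (of (⟨v, hv⟩ : Fin (k+1))) = of (⟨k-1, by omega⟩ : Fin (k+1)) := by
        rw [show (of (⟨v, hv⟩ : Fin (k+1)) : F k) = of ⟨v, by omega⟩ from rfl]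
        rw [αA_pow_of k (k-1-v) v (by omega)]
        exact of_mk_congr _ _ (by omega)
      rw [e2, pow_one, αA_apply, αf_of_top k hk]
      rw [_root_.map_mul, _root_.map_mul, _root_.map_inv]
      rw [αA_pow_Y]
      rw [show (of (⟨0, by omega⟩ : Fin (k+1)) : F k) = of ⟨0, by omega⟩ from rfl]
      rw [αA_pow_of k v 0 (by omega)]
      rw [of_mk_congr _ hv (by omega)]
    · have hl : (⟨v, hv⟩ : Fin (k+1)) = Fin.last k := by apply Fin.ext; simp; omega
      rw [hl, ← Y, αA_pow_Y]
      group
  have hhom : ((αA k)^k : MulAut (F k)).toMonoidHom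
      = ((MulAut.conj (Y k)).toMonoidHom : F k →* F k) := by
    apply FreeGroup.ext_hom
    intro i
    simpa [MulAut.conj_apply] using h i
  calc ((αA k)^k) z = ((αA k)^k : MulAut (F k)).toMonoidHom z := rfl
    _ = (MulAut.conj (Y k)).toMonoidHom z := by rw [hhom]
    _ = Y k * z * (Y k)⁻¹ := by simp [MulAut.conj_apply]

lemma αA_conj (hk : 0 < k) : ((αA k)^(k:ℤ)) = MulAut.conj (Y k) := by
  rw [zpow_natCast]
  apply MulEquiv.ext
  intro z
  rw [αA_pow_k k z hk]
  simp [MulAut.conj_apply]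

lemma αA_zpow_mul_k (hk : 0 < k) (m : ℤ) (z : F k) :
    ((αA k)^((k:ℤ) * m)) z = (Y k)^m * z * ((Y k)^m)⁻¹ := by
  have h1 : ((αA k)^((k:ℤ)*m)) = MulAut.conj ((Y k)^m) := by
    rw [zpow_mul, αA_conj k hk]
    exact (MonoidHom.map_zpow MulAut.conj (Y k) m).symm
  rw [h1, MulAut.conj_apply]

/-- the ℤ action -/
def θ : Multiplicative ℤ →* MulAut (F k) := zpowersHom _ (αA k)

lemma θ_apply (n : ℤ) : θ k (ofAdd n) = (αA k)^n := by
  simp [θ]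

abbrev W := SemidirectProduct (F k) (Multiplicative ℤ) (θ k)

def Φ : FreeGroup (Fin 2) →* W k :=
  FreeGroup.lift fun i =>
    if (i : ℕ) = 0 then inr (ofAdd (1:ℤ)) else inl (of (⟨0, by omega⟩ : Fin (k+1)))

lemma Φ_a : Φ k (a) = inr (ofAdd (1:ℤ)) := by simp [Φ, a]
lemma Φ_b : Φ k (b) = inl (of (⟨0, by omega⟩ : Fin (k+1))) := by simp [Φ, b]

lemma rightHom_Φ : (rightHom).comp (Φ k) = sig := by
  apply FreeGroup.ext_hom
  intro i
  simp only [MonoidHom.comp_apply, Φ, sig, FreeGroup.lift_apply_of]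
  by_cases h : (i : ℕ) = 0 <;> simp [h, Fin.ext_iff]

lemma right_Φ (w : FreeGroup (Fin 2)) : (Φ k w).right = sig w := by
  have := DFunLike.congr_fun (rightHom_Φ k) w
  simpa [rightHom] using this

def Ψ : F k →* FreeGroup (Fin 2) :=
  FreeGroup.lift fun i =>
    if (i : ℕ) < k then a^(i:ℕ) * b * (a^(i:ℕ))⁻¹ else a^k

lemma Ψ_of_lt (i : Fin (k+1)) (h : (i:ℕ) < k) : Ψ k (of i) = a^(i:ℕ) * b * (a^(i:ℕ))⁻¹ := by
  simp [Ψ, h]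

lemma Ψ_Y : Ψ k (Y k) = a^k := by
  simp [Ψ, Y]

lemma Ψ_αf (hk : 0 < k) (z : F k) : Ψ k (αf k z) = a * Ψ k z * a⁻¹ := by
  have hhom : (Ψ k).comp (αf k) = ((MulAut.conj a).toMonoidHom : _ →* _).comp (Ψ k) := by
    apply FreeGroup.ext_hom
    rintro ⟨v, hv⟩
    simp only [MonoidHom.comp_apply, MulEquiv.coe_toMonoidHom, MulAut.conj_apply]
    by_cases h1 : v < k
    · by_cases h2 : v + 1 < k
      · rw [show (of (⟨v, hv⟩ : Fin (k+1)) : F k) = of ⟨v, by omega⟩ from rfl]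
        rw [αf_of_mid k v h2]
        rw [Ψ_of_lt k ⟨v+1, by omega⟩ (by simpa using h2), Ψ_of_lt k ⟨v, by omega⟩ h1]
        show a^(v+1) * b * (a^(v+1))⁻¹ = _
        rw [pow_succ']
        group
      · have e0 : (of (⟨v, hv⟩ : Fin (k+1)) : F k) = of ⟨k-1, by omega⟩ :=
          of_mk_congr _ _ (by omega)
        rw [e0, αf_of_top k hk]
        rw [_root_.map_mul, _root_.map_mul, _root_.map_inv, Ψ_Y,
          Ψ_of_lt k ⟨0, by omega⟩ (by simpa using hk),
          Ψ_of_lt k ⟨k-1, by omega⟩ (by simp; omega)]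
        show a^k * (a^0 * b * (a^0)⁻¹) * (a^k)⁻¹ = a * (a^(k-1) * b * (a^(k-1))⁻¹) * a⁻¹
        have hks : a^k = a * a^(k-1) := by
          rw [← pow_succ']
          congr 1
          omega
        rw [hks]
        group
    · have hl : (⟨v, hv⟩ : Fin (k+1)) = Fin.last k := by apply Fin.ext; simp; omega
      rw [hl, ← Y, αf_Y, Ψ_Y]
      group
  have := DFunLike.congr_fun hhom z
  simpa [MulAut.conj_apply] using this

lemma Ψ_αg (hk : 0 < k) (z : F k) : Ψ k (αg k z) = a⁻¹ * Ψ k z * a := by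
  have h2 : αf k (αg k z) = z := by
    rw [← MonoidHom.comp_apply, αfg, MonoidHom.id_apply]
  have h3 := Ψ_αf k hk (αg k z)
  rw [h2] at h3
  rw [h3]
  group

lemma Ψ_zpow (hk : 0 < k) (n : ℤ) : ∀ z : F k,
    Ψ k (((αA k)^n) z) = a^n * Ψ k z * (a^n)⁻¹ := by
  induction n using Int.induction_on with
  | zero => simp
  | succ j ih =>
    intro z
    rw [zpow_add_one, MulAut.mul_apply]
    rw [show (αA k) z = αf k z from rfl]
    rw [ih (αf k z), Ψ_αf k hk z]
    rw [zpow_add_one]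
    group
  | pred j ih =>
    intro z
    rw [show (-(j:ℤ) - 1) = (-(j:ℤ)) - 1 from rfl, zpow_sub_one, MulAut.mul_apply]
    rw [αA_inv_apply, ih (αg k z), Ψ_αg k hk z]
    rw [zpow_sub_one]
    group

/-- the subgroup of `F₂` of elements whose first-generator exponent sum is divisible by `k` -/
def Hsub : Subgroup (FreeGroup (Fin 2)) :=
  Subgroup.comap sig (Subgroup.zpowers (ofAdd (k:ℤ)))

lemma mem_Hsub (w : FreeGroup (Fin 2)) : w ∈ Hsub k ↔ (k:ℤ) ∣ (sig w).toAdd := by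
  unfold Hsub
  rw [Subgroup.mem_comap, Subgroup.mem_zpowers_iff]
  constructor
  · rintro ⟨m, hm⟩
    refine ⟨m, ?_⟩
    rw [← hm]
    simp [mul_comm]
  · rintro ⟨m, hm⟩
    refine ⟨m, ?_⟩
    have : ((ofAdd (k:ℤ))^m).toAdd = (sig w).toAdd := by
      simpa [mul_comm] using hm.symm
    exact toAdd.injective this

def Fmap (w : FreeGroup (Fin 2)) : FreeGroup (Fin 2) :=
  Ψ k ((Φ k w).left) * a^((sig w).toAdd)

lemma θ_sig (x : FreeGroup (Fin 2)) : θ k (sig x) = (αA k)^((sig x).toAdd) := by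
  simp [θ]

lemma Fmap_mul (hk : 0 < k) (x y : FreeGroup (Fin 2)) :
    Fmap k (x * y) = Fmap k x * Fmap k y := by
  unfold Fmap
  rw [(Φ k).map_mul, mul_left, right_Φ, θ_sig]
  rw [(Ψ k).map_mul, Ψ_zpow k hk _ _]
  rw [sig.map_mul, toAdd_mul]
  rw [zpow_add]
  group

lemma Fmap_id (hk : 0 < k) (w : FreeGroup (Fin 2)) : Fmap k w = w := by
  have hG : MonoidHom.mk' (Fmap k) (Fmap_mul k hk) = MonoidHom.id (FreeGroup (Fin 2)) := by
    apply FreeGroup.ext_hom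
    intro i
    simp only [MonoidHom.mk'_apply, MonoidHom.id_apply]
    unfold Fmap
    by_cases h : (i : ℕ) = 0
    · have : Φ k (of i) = inr (ofAdd (1:ℤ)) := by simp [Φ, h, (Fin.ext h : i = 0)]
      rw [this]
      have hs : sig (of i) = ofAdd 1 := by simp [sig, h, (Fin.ext h : i = 0)]
      rw [hs]
      simp only [left_inr, (Ψ k).map_one, one_mul, toAdd_ofAdd, zpow_one]
      show a = of i
      unfold a
      congr 1
      apply Fin.ext
      simp [h]
    · have : Φ k (of i) = inl (of (⟨0, by omega⟩ : Fin (k+1))) := by simp [Φ, h, show i ≠ 0 from fun e => h (congrArg Fin.val e)]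
      rw [this]
      have hs : sig (of i) = 1 := by simp [sig, h, show i ≠ 0 from fun e => h (congrArg Fin.val e)]
      rw [hs]
      simp only [left_inl, toAdd_one, zpow_zero, mul_one]
      rw [Ψ_of_lt k ⟨0, by omega⟩ (by simpa using hk)]
      show a^0 * b * (a^0)⁻¹ = of i
      simp only [pow_zero, one_mul, inv_one, mul_one]
      unfold b
      congr 1
      apply Fin.ext
      have : (i : ℕ) < 2 := i.isLt
      simp
      omega
  exact DFunLike.congr_fun hG w

def Pmap (h : Hsub k) : F k :=
  (Φ k (h : FreeGroup (Fin 2))).left * (Y k)^((sig (h : FreeGroup (Fin 2))).toAdd / (k:ℤ))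

lemma Pmap_mul (hk : 0 < k) (h₁ h₂ : Hsub k) :
    Pmap k (h₁ * h₂) = Pmap k h₁ * Pmap k h₂ := by
  obtain ⟨m₁, hm₁⟩ := (mem_Hsub k _).1 h₁.2
  obtain ⟨m₂, hm₂⟩ := (mem_Hsub k _).1 h₂.2
  have hk0 : (k:ℤ) ≠ 0 := by exact_mod_cast hk.ne'
  unfold Pmap
  have hcoe : ((h₁ * h₂ : Hsub k) : FreeGroup (Fin 2))
      = (h₁ : FreeGroup (Fin 2)) * (h₂ : FreeGroup (Fin 2)) := rfl
  rw [hcoe, (Φ k).map_mul, mul_left, right_Φ, θ_sig, sig.map_mul, toAdd_mul]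
  rw [hm₁, hm₂]
  rw [αA_zpow_mul_k k hk m₁ _]
  have e1 : ((k:ℤ) * m₁ + (k:ℤ) * m₂) / (k:ℤ) = m₁ + m₂ := by
    rw [← mul_add]
    exact Int.mul_ediv_cancel_left _ hk0
  have e2 : ((k:ℤ) * m₁) / (k:ℤ) = m₁ := Int.mul_ediv_cancel_left _ hk0
  have e3 : ((k:ℤ) * m₂) / (k:ℤ) = m₂ := Int.mul_ediv_cancel_left _ hk0
  rw [e1, e2, e3, zpow_add]
  group

def Pcirc (hk : 0 < k) : Hsub k →* F k := MonoidHom.mk' (Pmap k) (Pmap_mul k hk)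

lemma mem_Hsub_Ψ (z : F k) : Ψ k z ∈ Hsub k := by
  induction z using FreeGroup.induction_on with
  | C1 => rw [(Ψ k).map_one]; exact one_mem _
  | of i =>
    show Ψ k (of i) ∈ Hsub k
    rw [mem_Hsub]
    by_cases h : (i : ℕ) < k
    · rw [Ψ_of_lt k i h]
      simp only [_root_.map_mul, _root_.map_inv, _root_.map_pow, sig_a, sig_b]
      refine ⟨0, ?_⟩
      rw [show ((ofAdd (1:ℤ))^(i:ℕ) * 1 * ((ofAdd (1:ℤ))^(i:ℕ))⁻¹ : Multiplicative ℤ) = 1 by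
        group]
      simp
    · have : (i : Fin (k+1)) = Fin.last k := by apply Fin.ext; simp; omega
      rw [this, show (of (Fin.last k) : F k) = Y k from rfl, Ψ_Y]
      simp only [_root_.map_pow, sig_a]
      refine ⟨1, ?_⟩
      simp [toAdd_pow]
  | inv_of i ih =>
    rw [(Ψ k).map_inv]
    exact inv_mem ih
  | mul x y ihx ihy =>
    rw [(Ψ k).map_mul]
    exact mul_mem ihx ihy

def Ψ' : F k →* Hsub k := (Ψ k).codRestrict (Hsub k) (mem_Hsub_Ψ k)

lemma PΨ (hk : 0 < k) : (Pcirc k hk).comp (Ψ' k) = MonoidHom.id (F k) := by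
  apply FreeGroup.ext_hom
  intro i
  simp only [MonoidHom.comp_apply, MonoidHom.id_apply]
  show Pmap k (Ψ' k (of i)) = of i
  have hcoe : ((Ψ' k (of i) : Hsub k) : FreeGroup (Fin 2)) = Ψ k (of i) := rfl
  unfold Pmap
  rw [hcoe]
  by_cases h : (i : ℕ) < k
  · rw [Ψ_of_lt k i h]
    have hΦ : Φ k (a^(i:ℕ) * b * (a^(i:ℕ))⁻¹)
        = inl (((αA k)^((i:ℕ):ℤ)) (of (⟨0, by omega⟩ : Fin (k+1)))) := by
      rw [(Φ k).map_mul, (Φ k).map_mul, (Φ k).map_inv, (Φ k).map_pow, Φ_a, Φ_b]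
      rw [← (inr : Multiplicative ℤ →* W k).map_pow, ← (inr : Multiplicative ℤ →* W k).map_inv]
      rw [← inl_aut]
      congr 1
      rw [show ((ofAdd (1:ℤ))^(i:ℕ) : Multiplicative ℤ) = ofAdd ((i:ℕ):ℤ) by
        simp [← ofAdd_nsmul]]
      rw [θ_apply]
    have hsig : sig (a^(i:ℕ) * b * (a^(i:ℕ))⁻¹) = 1 := by
      simp only [_root_.map_mul, _root_.map_inv, _root_.map_pow, sig_a, sig_b]
      group
    rw [hΦ, hsig, left_inl]
    simp only [toAdd_one, Int.zero_ediv, zpow_zero, mul_one]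
    rw [zpow_natCast, αA_pow_of k (i:ℕ) 0 (by omega)]
    congr 1
    apply Fin.ext
    simp
  · have hlast : (i : Fin (k+1)) = Fin.last k := by apply Fin.ext; simp; omega
    rw [hlast, show (of (Fin.last k) : F k) = Y k from rfl, Ψ_Y]
    have hΦ : Φ k (a^k) = inr ((ofAdd (1:ℤ))^k) := by
      rw [(Φ k).map_pow, Φ_a, ← (inr : Multiplicative ℤ →* W k).map_pow]
    have hsig : sig (a^k) = (ofAdd (1:ℤ))^k := by
      rw [_root_.map_pow, sig_a]
    rw [hΦ, hsig, left_inr]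
    have : ((ofAdd (1:ℤ))^k).toAdd = (k:ℤ) := by simp [toAdd_pow]
    rw [this, Int.ediv_self (by exact_mod_cast hk.ne' : (k:ℤ) ≠ 0)]
    simp [Y]

lemma ΨP (hk : 0 < k) (h : Hsub k) : Ψ' k (Pcirc k hk h) = h := by
  apply Subtype.ext
  show Ψ k (Pmap k h) = (h : FreeGroup (Fin 2))
  obtain ⟨m, hm⟩ := (mem_Hsub k _).1 h.2
  unfold Pmap
  rw [(Ψ k).map_mul, (Ψ k).map_zpow, Ψ_Y]
  have hk0 : (k:ℤ) ≠ 0 := by exact_mod_cast hk.ne'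
  have e1 : ((a^k : FreeGroup (Fin 2)))^((sig (h : FreeGroup (Fin 2))).toAdd / (k:ℤ))
      = a^((sig (h : FreeGroup (Fin 2))).toAdd) := by
    rw [← zpow_natCast a k, ← zpow_mul]
    congr 1
    rw [hm, Int.mul_ediv_cancel_left _ hk0]
  rw [e1]
  exact Fmap_id k hk _

/-- the isomorphism between the mod-k subgroup of F₂ and the free group of rank k+1 -/
def e2 (hk : 0 < k) : Hsub k ≃* F k where
  toFun := Pcirc k hk
  invFun := Ψ' k
  left_inv := ΨP k hk
  right_inv := fun z => DFunLike.congr_fun (PΨ k hk) z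
  map_mul' := map_mul _

end Aux2

namespace Glue
open Multiplicative

abbrev Vm := Multiplicative (Fin 2 → ℤ)

lemma fin2_eq_one {j : Fin 2} (hj : j ≠ 0) : j = 1 := by
  apply Fin.ext
  have h1 := j.isLt
  have h2 : (j : ℕ) ≠ 0 := fun h => hj (Fin.ext h)
  omega

/-- the matrix `[[1-k, -1],[k, 1]]` as an automorphism of ℤ² -/
def AmatF (k : ℤ) : (Fin 2 → ℤ) ≃+ (Fin 2 → ℤ) where
  toFun v := fun j => if j = 0 then (1 - k) * v 0 - v 1 else k * v 0 + v 1
  invFun w := fun j => if j = 0 then w 0 + w 1 else -k * w 0 + (1 - k) * w 1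
  left_inv v := by
    funext j
    by_cases hj : j = 0
    · simp [hj]; try ring
    · rw [fin2_eq_one hj]; simp [show (1:Fin 2) ≠ 0 by decide]; try ring
  right_inv w := by
    funext j
    by_cases hj : j = 0
    · simp [hj]; try ring
    · rw [fin2_eq_one hj]; simp [show (1:Fin 2) ≠ 0 by decide]; try ring
  map_add' u v := by
    funext j
    by_cases hj : j = 0
    · simp [hj]; try ring
    · rw [fin2_eq_one hj]; simp [show (1:Fin 2) ≠ 0 by decide]; try ring

/-- the matrix `[[1, 0],[-k, 1]]` as an automorphism of ℤ² -/
def BmatF (k : ℤ) : (Fin 2 → ℤ) ≃+ (Fin 2 → ℤ) where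
  toFun v := fun j => if j = 0 then v 0 else v 1 - k * v 0
  invFun w := fun j => if j = 0 then w 0 else w 1 + k * w 0
  left_inv v := by
    funext j
    by_cases hj : j = 0
    · simp [hj]; try ring
    · rw [fin2_eq_one hj]; simp [show (1:Fin 2) ≠ 0 by decide]; try ring
  right_inv w := by
    funext j
    by_cases hj : j = 0
    · simp [hj]; try ring
    · rw [fin2_eq_one hj]; simp [show (1:Fin 2) ≠ 0 by decide]; try ring
  map_add' u v := by
    funext j
    by_cases hj : j = 0
    · simp [hj]; try ring
    · rw [fin2_eq_one hj]; simp [show (1:Fin 2) ≠ 0 by decide]; try ring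

/-- `-I` -/
def negF : (Fin 2 → ℤ) ≃+ (Fin 2 → ℤ) where
  toFun v := -v
  invFun v := -v
  left_inv v := by simp
  right_inv v := by simp
  map_add' u v := by simp; abel

/-- `diag(1, -1)` -/
def diagF : (Fin 2 → ℤ) ≃+ (Fin 2 → ℤ) where
  toFun v := fun j => if j = 0 then v 0 else -(v 1)
  invFun v := fun j => if j = 0 then v 0 else -(v 1)
  left_inv v := by
    funext j
    by_cases hj : j = 0
    · simp [hj]
    · rw [fin2_eq_one hj]; simp [show (1:Fin 2) ≠ 0 by decide]
  right_inv v := by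
    funext j
    by_cases hj : j = 0
    · simp [hj]
    · rw [fin2_eq_one hj]; simp [show (1:Fin 2) ≠ 0 by decide]
  map_add' u v := by
    funext j
    by_cases hj : j = 0
    · simp [hj]; try ring
    · rw [fin2_eq_one hj]; simp [show (1:Fin 2) ≠ 0 by decide]; try ring

def Amat (k : ℤ) : Vm ≃* Vm := AddEquiv.toMultiplicative (AmatF k)
def Bmat (k : ℤ) : Vm ≃* Vm := AddEquiv.toMultiplicative (BmatF k)
def negM : Vm ≃* Vm := AddEquiv.toMultiplicative negF
def diagM : Vm ≃* Vm := AddEquiv.toMultiplicative diagF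

lemma toAdd_Amat (k : ℤ) (v : Vm) (j : Fin 2) :
    (Amat k v).toAdd j = if j = 0 then (1 - k) * (v.toAdd 0) - v.toAdd 1
      else k * v.toAdd 0 + v.toAdd 1 := rfl

lemma toAdd_Bmat (k : ℤ) (v : Vm) (j : Fin 2) :
    (Bmat k v).toAdd j = if j = 0 then v.toAdd 0 else v.toAdd 1 - k * v.toAdd 0 := rfl

lemma toAdd_negM (v : Vm) (j : Fin 2) : (negM v).toAdd j = -(v.toAdd j) := rfl

lemma toAdd_diagM (v : Vm) (j : Fin 2) :
    (diagM v).toAdd j = if j = 0 then v.toAdd 0 else -(v.toAdd 1) := rfl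

variable (g : ℕ) (hg : 2 ≤ g)

abbrev GG := FreeGroup (Fin g) × Vm

/-- the general shape of automorphisms of `F_g × ℤ²` we use -/
def φbig (f : FreeGroup (Fin g) ≃* FreeGroup (Fin g)) (A : Vm ≃* Vm)
    (l : FreeGroup (Fin g) →* Vm) : GG g ≃* GG g where
  toFun x := (f x.1, A x.2 * l x.1)
  invFun x := (f.symm x.1, A.symm (x.2 * (l (f.symm x.1))⁻¹))
  left_inv x := by
    obtain ⟨y, v⟩ := x
    simp
  right_inv x := by
    obtain ⟨y, v⟩ := x
    simp
  map_mul' x y := by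
    obtain ⟨x1, v⟩ := x
    obtain ⟨y1, w⟩ := y
    have h2 : A (v * w) * l (x1 * y1) = (A v * l x1) * (A w * l y1) := by
      rw [_root_.map_mul, _root_.map_mul, mul_mul_mul_comm]
    show ((f (x1 * y1), A (v * w) * l (x1 * y1)) : GG g)
        = (f x1 * f y1, (A v * l x1) * (A w * l y1))
    rw [_root_.map_mul, h2]

lemma mem_fix_φbig (f : FreeGroup (Fin g) ≃* FreeGroup (Fin g)) (A : Vm ≃* Vm)
    (l : FreeGroup (Fin g) →* Vm) (x : GG g) :
    x ∈ fixedSubgroup (φbig g f A l).toMonoidHom ↔ (f x.1 = x.1 ∧ A x.2 * l x.1 = x.2) := by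
  show (φbig g f A l) x = x ↔ _
  rw [show (φbig g f A l) x = (f x.1, A x.2 * l x.1) from rfl, Prod.ext_iff]

/-- embedding of the letters -/
def eemb : Fin 2 → Fin g := Fin.castLE hg

def rretr : Fin g → Fin 2 := fun i => if h : (i:ℕ) < 2 then ⟨i, h⟩ else ⟨0, by omega⟩

def ι : FreeGroup (Fin 2) →* FreeGroup (Fin g) := FreeGroup.map (eemb g hg)

def ρ : FreeGroup (Fin g) →* FreeGroup (Fin 2) := FreeGroup.map (rretr g)

lemma ρι (w : FreeGroup (Fin 2)) : ρ g (ι g hg w) = w := by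
  have h : (ρ g).comp (ι g hg) = MonoidHom.id _ := by
    apply FreeGroup.ext_hom
    intro i
    simp only [MonoidHom.comp_apply, MonoidHom.id_apply, ι, ρ, FreeGroup.map.of]
    congr 1
    unfold rretr eemb
    rw [dif_pos (show ((Fin.castLE hg i : Fin g) : ℕ) < 2 from i.isLt)]
    exact Fin.ext rfl
  exact DFunLike.congr_fun h w

lemma list_comp_map (L : List (Fin g × Bool)) (h : ∀ l ∈ L, (l.1 : ℕ) < 2) :
    (L.map (fun y => (rretr g y.1, y.2))).map
      (fun (y : Fin 2 × Bool) => ((eemb g hg y.1 : Fin g), y.2)) = L := by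
  induction L with
  | nil => rfl
  | cons l L ih =>
    simp only [List.map_cons]
    rw [ih (fun m hm => h m (List.mem_cons_of_mem _ hm))]
    have h2 := h l (List.mem_cons_self)
    have e1 : rretr g l.1 = ⟨(l.1 : ℕ), h2⟩ := dif_pos h2
    have e2 : (eemb g hg (⟨(l.1 : ℕ), h2⟩ : Fin 2) : Fin g) = l.1 := Fin.ext rfl
    obtain ⟨i, c⟩ := l
    simp [e1, e2]

lemma ιρ (x : FreeGroup (Fin g)) (hx : ∀ l ∈ x.toWord, (l.1 : ℕ) < 2) :
    ι g hg (ρ g x) = x := by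
  conv_rhs => rw [← FreeGroup.mk_toWord (x := x)]
  conv_lhs => rw [← FreeGroup.mk_toWord (x := x)]
  unfold ι ρ
  rw [FreeGroup.map.mk, FreeGroup.map.mk]
  congr 1
  rw [List.map_map]
  rw [← List.map_map]
  exact list_comp_map g hg _ hx

/-- exponent sum of the first letter in `F_g` -/
def μg : FreeGroup (Fin g) →* Multiplicative ℤ :=
  FreeGroup.lift fun i => if (i : ℕ) = 0 then ofAdd (1:ℤ) else 1

lemma μg_ι (w : FreeGroup (Fin 2)) : μg g (ι g hg w) = Aux2.sig w := by
  have h : (μg g).comp (ι g hg) = Aux2.sig := by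
    apply FreeGroup.ext_hom
    intro i
    simp only [MonoidHom.comp_apply, ι, FreeGroup.map.of, μg, Aux2.sig, FreeGroup.lift_apply_of]
    rfl
  exact DFunLike.congr_fun h w

def emb2 : Multiplicative ℤ →* Vm :=
  AddMonoidHom.toMultiplicative
    { toFun := fun n => fun j => if j = 0 then 0 else n
      map_zero' := by funext j; simp
      map_add' := fun m n => by
        funext j
        by_cases hj : j = 0 <;> simp [hj] }

def ell : FreeGroup (Fin g) →* Vm := (emb2).comp (μg g)

lemma toAdd_ell (x : FreeGroup (Fin g)) (j : Fin 2) :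
    (ell g x).toAdd j = if j = 0 then 0 else (μg g x).toAdd := rfl

/-- the predicate for the letters kept by the flip -/
abbrev ptwo : Fin g → Prop := fun i => (i : ℕ) < 2

lemma flip_ι (w : FreeGroup (Fin 2)) : Aux.flip (ptwo g) (ι g hg w) = ι g hg w := by
  have h : (Aux.flip (ptwo g)).comp (ι g hg) = ι g hg := by
    apply FreeGroup.ext_hom
    intro i
    simp only [MonoidHom.comp_apply, ι, FreeGroup.map.of]
    unfold Aux.flip
    rw [FreeGroup.lift_apply_of, if_pos (show ptwo g (eemb g hg i) from i.isLt)]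
  exact DFunLike.congr_fun h w

/-! ### the `t ≥ 2` machinery -/

lemma toAdd_ell_zero (x : FreeGroup (Fin g)) : (ell g x).toAdd 0 = 0 := rfl

lemma toAdd_ell_one (x : FreeGroup (Fin g)) : (ell g x).toAdd 1 = (μg g x).toAdd := by
  show (if (1 : Fin 2) = 0 then (0:ℤ) else (μg g x).toAdd) = _
  rw [if_neg (by decide)]

def φmain (k : ℕ) : GG g ≃* GG g :=
  φbig g (Aux.flipEquiv (ptwo g)) (Amat (k:ℤ)) (ell g)

lemma fix_cond_φ (k : ℕ) (y : FreeGroup (Fin g)) (v : Vm) :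
    (Amat (k:ℤ) v * ell g y = v) ↔
      (v.toAdd 1 = -((k:ℤ) * v.toAdd 0) ∧ (μg g y).toAdd = -((k:ℤ) * v.toAdd 0)) := by
  constructor
  · intro h
    have h' : (Amat (k:ℤ) v).toAdd + (ell g y).toAdd = v.toAdd := by
      rw [← toAdd_mul, h]
    have h0 := congrFun h' 0
    have h1 := congrFun h' 1
    rw [Pi.add_apply, toAdd_Amat, toAdd_ell_zero] at h0
    rw [Pi.add_apply, toAdd_Amat, toAdd_ell_one] at h1
    rw [if_pos rfl] at h0
    rw [if_neg (by decide)] at h1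
    constructor
    · linear_combination -h0
    · linear_combination h1
  · rintro ⟨h1, h2⟩
    apply toAdd.injective
    rw [toAdd_mul]
    funext j
    rw [Pi.add_apply, toAdd_Amat]
    by_cases hj : j = 0
    · subst hj
      rw [if_pos rfl, toAdd_ell_zero]
      linear_combination -h1
    · rw [fin2_eq_one hj, if_neg (by decide), toAdd_ell_one]
      linear_combination h2

def fixφEquiv (k : ℕ) (hk : 0 < k) :
    fixedSubgroup (φmain g k).toMonoidHom ≃* Aux2.Hsub k where
  toFun x := ⟨ρ g x.1.1, by
    obtain ⟨hf, hc⟩ := (mem_fix_φbig g _ _ _ x.1).1 x.2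
    rw [Aux.flipEquiv_apply] at hf
    have hlet := (Aux.flip_fixed_iff (ptwo g) x.1.1).1 hf
    have hιρ := ιρ g hg x.1.1 hlet
    have hσ : Aux2.sig (ρ g x.1.1) = μg g x.1.1 := by
      rw [← μg_ι g hg (ρ g x.1.1), hιρ]
    rw [Aux2.mem_Hsub]
    obtain ⟨h1, h2⟩ := (fix_cond_φ g k x.1.1 x.1.2).1 hc
    refine ⟨-(x.1.2.toAdd 0), ?_⟩
    rw [hσ, h2]
    ring⟩
  invFun w := ⟨(ι g hg (w : FreeGroup (Fin 2)),
      ofAdd fun j => if j = 0 then -((Aux2.sig (w : FreeGroup (Fin 2))).toAdd / (k:ℤ))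
        else (Aux2.sig (w : FreeGroup (Fin 2))).toAdd), by
    obtain ⟨m, hm⟩ := (Aux2.mem_Hsub k _).1 w.2
    have hk0 : (k:ℤ) ≠ 0 := by exact_mod_cast hk.ne'
    apply (mem_fix_φbig g _ _ _ _).2
    constructor
    · rw [Aux.flipEquiv_apply]
      exact flip_ι g hg _
    · apply (fix_cond_φ g k _ _).2
      have hdiv : (Aux2.sig (w : FreeGroup (Fin 2))).toAdd / (k:ℤ) = m := by
        rw [hm, Int.mul_ediv_cancel_left _ hk0]
      constructor
      · show (Aux2.sig (w : FreeGroup (Fin 2))).toAdd = -((k:ℤ) * _)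
        rw [show (ofAdd fun j => if j = 0 then -((Aux2.sig (w : FreeGroup (Fin 2))).toAdd / (k:ℤ))
            else (Aux2.sig (w : FreeGroup (Fin 2))).toAdd : Vm).toAdd 0
          = -((Aux2.sig (w : FreeGroup (Fin 2))).toAdd / (k:ℤ)) from rfl]
        rw [hdiv, hm]
        ring
      · rw [μg_ι]
        rw [show (ofAdd fun j => if j = 0 then -((Aux2.sig (w : FreeGroup (Fin 2))).toAdd / (k:ℤ))
            else (Aux2.sig (w : FreeGroup (Fin 2))).toAdd : Vm).toAdd 0
          = -((Aux2.sig (w : FreeGroup (Fin 2))).toAdd / (k:ℤ)) from rfl]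
        rw [hdiv, hm]
        ring⟩
  left_inv x := by
    have hk0 : (k:ℤ) ≠ 0 := by exact_mod_cast hk.ne'
    obtain ⟨hf, hc⟩ := (mem_fix_φbig g _ _ _ x.1).1 x.2
    rw [Aux.flipEquiv_apply] at hf
    have hlet := (Aux.flip_fixed_iff (ptwo g) x.1.1).1 hf
    have hιρ := ιρ g hg x.1.1 hlet
    have hσ : Aux2.sig (ρ g x.1.1) = μg g x.1.1 := by
      rw [← μg_ι g hg (ρ g x.1.1), hιρ]
    obtain ⟨h1, h2⟩ := (fix_cond_φ g k x.1.1 x.1.2).1 hc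
    apply Subtype.ext
    apply Prod.ext
    · exact hιρ
    · apply toAdd.injective
      funext j
      show (if j = 0 then -((Aux2.sig (ρ g x.1.1)).toAdd / (k:ℤ))
        else (Aux2.sig (ρ g x.1.1)).toAdd) = x.1.2.toAdd j
      rw [hσ, h2]
      by_cases hj : j = 0
      · subst hj
        rw [if_pos rfl]
        rw [show (-((k:ℤ) * x.1.2.toAdd 0)) = (k:ℤ) * (-(x.1.2.toAdd 0)) by ring]
        rw [Int.mul_ediv_cancel_left _ hk0]
        ring
      · rw [fin2_eq_one hj, if_neg (by decide)]
        linear_combination -h1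
  right_inv w := by
    apply Subtype.ext
    show ρ g (ι g hg (w : FreeGroup (Fin 2))) = (w : FreeGroup (Fin 2))
    exact ρι g hg _
  map_mul' x y := by
    apply Subtype.ext
    show ρ g (x.1.1 * y.1.1) = ρ g x.1.1 * ρ g y.1.1
    exact (ρ g).map_mul _ _

def ψmain (k : ℕ) : GG g ≃* GG g :=
  φbig g (Aux.flipEquiv (ptwo g)) (Bmat (k:ℤ)) (ell g)

lemma fix_cond_ψ (k : ℕ) (y : FreeGroup (Fin g)) (v : Vm) :
    (Bmat (k:ℤ) v * ell g y = v) ↔ ((μg g y).toAdd = (k:ℤ) * v.toAdd 0) := by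
  constructor
  · intro h
    have h' : (Bmat (k:ℤ) v).toAdd + (ell g y).toAdd = v.toAdd := by
      rw [← toAdd_mul, h]
    have h1 := congrFun h' 1
    rw [Pi.add_apply, toAdd_Bmat, toAdd_ell_one, if_neg (by decide)] at h1
    linear_combination h1
  · intro h1
    apply toAdd.injective
    rw [toAdd_mul]
    funext j
    rw [Pi.add_apply, toAdd_Bmat]
    by_cases hj : j = 0
    · subst hj
      rw [if_pos rfl, toAdd_ell_zero]
      ring
    · rw [fin2_eq_one hj, if_neg (by decide), toAdd_ell_one]
      linear_combination h1

def fixψEquiv (k : ℕ) (hk : 0 < k) :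
    fixedSubgroup (ψmain g k).toMonoidHom ≃* (Aux2.Hsub k × Multiplicative ℤ) where
  toFun x := (⟨ρ g x.1.1, by
    obtain ⟨hf, hc⟩ := (mem_fix_φbig g _ _ _ x.1).1 x.2
    rw [Aux.flipEquiv_apply] at hf
    have hlet := (Aux.flip_fixed_iff (ptwo g) x.1.1).1 hf
    have hιρ := ιρ g hg x.1.1 hlet
    have hσ : Aux2.sig (ρ g x.1.1) = μg g x.1.1 := by
      rw [← μg_ι g hg (ρ g x.1.1), hιρ]
    rw [Aux2.mem_Hsub]
    have h2 := (fix_cond_ψ g k x.1.1 x.1.2).1 hc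
    exact ⟨x.1.2.toAdd 0, by rw [hσ, h2]⟩⟩, ofAdd (x.1.2.toAdd 1))
  invFun p := ⟨(ι g hg (p.1 : FreeGroup (Fin 2)),
      ofAdd fun j => if j = 0 then ((Aux2.sig (p.1 : FreeGroup (Fin 2))).toAdd / (k:ℤ))
        else p.2.toAdd), by
    obtain ⟨m, hm⟩ := (Aux2.mem_Hsub k _).1 p.1.2
    have hk0 : (k:ℤ) ≠ 0 := by exact_mod_cast hk.ne'
    apply (mem_fix_φbig g _ _ _ _).2
    constructor
    · rw [Aux.flipEquiv_apply]
      exact flip_ι g hg _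
    · apply (fix_cond_ψ g k _ _).2
      rw [μg_ι]
      show (Aux2.sig (p.1 : FreeGroup (Fin 2))).toAdd
        = (k:ℤ) * ((Aux2.sig (p.1 : FreeGroup (Fin 2))).toAdd / (k:ℤ))
      rw [hm, Int.mul_ediv_cancel_left _ hk0]⟩
  left_inv x := by
    have hk0 : (k:ℤ) ≠ 0 := by exact_mod_cast hk.ne'
    obtain ⟨hf, hc⟩ := (mem_fix_φbig g _ _ _ x.1).1 x.2
    rw [Aux.flipEquiv_apply] at hf
    have hlet := (Aux.flip_fixed_iff (ptwo g) x.1.1).1 hf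
    have hιρ := ιρ g hg x.1.1 hlet
    have hσ : Aux2.sig (ρ g x.1.1) = μg g x.1.1 := by
      rw [← μg_ι g hg (ρ g x.1.1), hιρ]
    have h2 := (fix_cond_ψ g k x.1.1 x.1.2).1 hc
    apply Subtype.ext
    apply Prod.ext
    · exact hιρ
    · apply toAdd.injective
      funext j
      show (if j = 0 then ((Aux2.sig (ρ g x.1.1)).toAdd / (k:ℤ))
        else (ofAdd (x.1.2.toAdd 1)).toAdd) = x.1.2.toAdd j
      by_cases hj : j = 0
      · subst hj
        rw [if_pos rfl, hσ, h2, Int.mul_ediv_cancel_left _ hk0]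
      · rw [fin2_eq_one hj, if_neg (by decide)]
        rfl
  right_inv p := by
    apply Prod.ext
    · apply Subtype.ext
      show ρ g (ι g hg (p.1 : FreeGroup (Fin 2))) = (p.1 : FreeGroup (Fin 2))
      exact ρι g hg _
    · show ofAdd (if (1 : Fin 2) = 0
          then ((Aux2.sig ((p.1 : ↥(Aux2.Hsub k)) : FreeGroup (Fin 2))).toAdd / (k:ℤ))
          else p.2.toAdd) = p.2
      rw [if_neg (by decide)]
      rfl
  map_mul' x y := by
    apply Prod.ext
    · apply Subtype.ext
      show ρ g (x.1.1 * y.1.1) = ρ g x.1.1 * ρ g y.1.1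
      exact (ρ g).map_mul _ _
    · show ofAdd ((x.1.2 * y.1.2).toAdd 1) = ofAdd (x.1.2.toAdd 1) * ofAdd (y.1.2.toAdd 1)
      rw [toAdd_mul, Pi.add_apply, ofAdd_add]

/-! ### small cases -/

lemma freeGroup_isEmpty_eq_one {γ : Type} [IsEmpty γ] (z : FreeGroup γ) : z = 1 := by
  rw [← FreeGroup.toWord_eq_nil_iff]
  cases hW : z.toWord with
  | nil => rfl
  | cons l _ => exact (IsEmpty.false l.1).elim

lemma eq_one_of_all_false (y : FreeGroup (Fin g)) (h : ∀ l ∈ y.toWord, False) : y = 1 := by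
  rw [← FreeGroup.toWord_eq_nil_iff]
  cases hW : y.toWord with
  | nil => rfl
  | cons l L => exact (h l (by rw [hW]; exact List.mem_cons_self)).elim

abbrev pnone : Fin g → Prop := fun _ => False
abbrev pzero : Fin g → Prop := fun i => (i : ℕ) = 0

lemma negM_fix (v : Vm) : negM v * 1 = v ↔ v = 1 := by
  rw [mul_one]
  constructor
  · intro h
    apply toAdd.injective
    have h' : (negM v).toAdd = v.toAdd := by rw [h]
    funext j
    have := congrFun h' j
    rw [toAdd_negM] at this
    show v.toAdd j = (0 : Fin 2 → ℤ) j
    simp only [Pi.zero_apply]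
    omega
  · rintro rfl
    apply toAdd.injective
    funext j
    rw [toAdd_negM]
    show -(((1:Vm)).toAdd j) = ((1:Vm)).toAdd j
    show -((0 : Fin 2 → ℤ) j) = (0 : Fin 2 → ℤ) j
    simp

lemma diagM_fix (v : Vm) : diagM v * 1 = v ↔ v.toAdd 1 = 0 := by
  rw [mul_one]
  constructor
  · intro h
    have h' := congrFun (show (diagM v).toAdd = v.toAdd by rw [h]) 1
    rw [toAdd_diagM, if_neg (by decide)] at h'
    omega
  · intro h
    apply toAdd.injective
    funext j
    rw [toAdd_diagM]
    by_cases hj : j = 0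
    · subst hj; rw [if_pos rfl]
    · rw [fin2_eq_one hj, if_neg (by decide)]
      omega

def ι1 : FreeGroup (Fin 1) →* FreeGroup (Fin g) :=
  FreeGroup.map fun _ => (⟨0, by omega⟩ : Fin g)

def ρ1 : FreeGroup (Fin g) →* FreeGroup (Fin 1) := FreeGroup.map fun _ => (0 : Fin 1)

lemma ρ1ι1 (w : FreeGroup (Fin 1)) : ρ1 g (ι1 g hg w) = w := by
  have h : (ρ1 g).comp (ι1 g hg) = MonoidHom.id _ := by
    apply FreeGroup.ext_hom
    intro i
    simp only [MonoidHom.comp_apply, MonoidHom.id_apply, ι1, ρ1, FreeGroup.map.of]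
    congr 1
    exact Subsingleton.elim _ _
  exact DFunLike.congr_fun h w

lemma list_comp_map1 (L : List (Fin g × Bool)) (h : ∀ l ∈ L, (l.1 : ℕ) = 0) :
    (L.map (fun y => ((0 : Fin 1), y.2))).map
      (fun (y : Fin 1 × Bool) => ((⟨0, by omega⟩ : Fin g), y.2)) = L := by
  induction L with
  | nil => rfl
  | cons l L ih =>
    simp only [List.map_cons]
    rw [ih (fun m hm => h m (List.mem_cons_of_mem _ hm))]
    obtain ⟨i, c⟩ := l
    have h2 : (i : ℕ) = 0 := h (i, c) (List.mem_cons_self)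
    have e2 : (⟨0, by omega⟩ : Fin g) = i := Fin.ext (show (0:ℕ) = (i:ℕ) by omega)
    rw [e2]

lemma ι1ρ1 (y : FreeGroup (Fin g)) (hy : ∀ l ∈ y.toWord, (l.1 : ℕ) = 0) :
    ι1 g hg (ρ1 g y) = y := by
  conv_rhs => rw [← FreeGroup.mk_toWord (x := y)]
  conv_lhs => rw [← FreeGroup.mk_toWord (x := y)]
  unfold ι1 ρ1
  rw [FreeGroup.map.mk, FreeGroup.map.mk]
  congr 1
  exact list_comp_map1 g hg _ hy

lemma flip_ι1 (w : FreeGroup (Fin 1)) :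
    Aux.flip (pzero g) (ι1 g hg w) = ι1 g hg w := by
  have h : (Aux.flip (pzero g)).comp (ι1 g hg) = ι1 g hg := by
    apply FreeGroup.ext_hom
    intro i
    simp only [MonoidHom.comp_apply, ι1, FreeGroup.map.of]
    unfold Aux.flip
    rw [FreeGroup.lift_apply_of, if_pos (show pzero g ⟨0, by omega⟩ from rfl)]
  exact DFunLike.congr_fun h w

/-- `t = 0`, free case -/
def fix0φ : fixedSubgroup (φbig g (Aux.flipEquiv (pnone g)) negM 1).toMonoidHom
    ≃* FreeGroup (Fin 0) where
  toFun _ := 1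
  invFun _ := ⟨(1, 1), by
    apply (mem_fix_φbig g _ _ _ _).2
    constructor
    · rw [Aux.flipEquiv_apply]
      exact (Aux.flip (pnone g)).map_one
    · rw [MonoidHom.one_apply]
      exact (negM_fix 1).2 rfl⟩
  left_inv x := by
    obtain ⟨hf, hc⟩ := (mem_fix_φbig g _ _ _ x.1).1 x.2
    rw [Aux.flipEquiv_apply] at hf
    rw [MonoidHom.one_apply] at hc
    apply Subtype.ext
    apply Prod.ext
    · exact (eq_one_of_all_false g x.1.1 ((Aux.flip_fixed_iff (pnone g) x.1.1).1 hf)).symm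
    · exact ((negM_fix x.1.2).1 hc).symm
  right_inv z := (freeGroup_isEmpty_eq_one z).symm
  map_mul' _ _ := (one_mul 1).symm

/-- `t = 1`, free case -/
def fix1φ : fixedSubgroup (φbig g (Aux.flipEquiv (pzero g)) negM 1).toMonoidHom
    ≃* FreeGroup (Fin 1) where
  toFun x := ρ1 g x.1.1
  invFun w := ⟨(ι1 g hg w, 1), by
    apply (mem_fix_φbig g _ _ _ _).2
    constructor
    · rw [Aux.flipEquiv_apply]
      exact flip_ι1 g hg w
    · rw [MonoidHom.one_apply]
      exact (negM_fix 1).2 rfl⟩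
  left_inv x := by
    obtain ⟨hf, hc⟩ := (mem_fix_φbig g _ _ _ x.1).1 x.2
    rw [Aux.flipEquiv_apply] at hf
    rw [MonoidHom.one_apply] at hc
    apply Subtype.ext
    apply Prod.ext
    · exact ι1ρ1 g hg x.1.1 ((Aux.flip_fixed_iff (pzero g) x.1.1).1 hf)
    · exact ((negM_fix x.1.2).1 hc).symm
  right_inv w := ρ1ι1 g hg w
  map_mul' x y := (ρ1 g).map_mul _ _

/-- `t = 0`, `ℤ`-factor case -/
def fix0ψ : fixedSubgroup (φbig g (Aux.flipEquiv (pnone g)) diagM 1).toMonoidHom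
    ≃* (FreeGroup (Fin 0) × Multiplicative ℤ) where
  toFun x := (1, ofAdd (x.1.2.toAdd 0))
  invFun p := ⟨(1, ofAdd fun j => if j = 0 then p.2.toAdd else 0), by
    apply (mem_fix_φbig g _ _ _ _).2
    constructor
    · rw [Aux.flipEquiv_apply]
      exact (Aux.flip (pnone g)).map_one
    · rw [MonoidHom.one_apply]
      apply (diagM_fix _).2
      show (if (1 : Fin 2) = 0 then p.2.toAdd else 0) = 0
      rw [if_neg (by decide)]⟩
  left_inv x := by
    obtain ⟨hf, hc⟩ := (mem_fix_φbig g _ _ _ x.1).1 x.2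
    rw [Aux.flipEquiv_apply] at hf
    rw [MonoidHom.one_apply] at hc
    have h1 := (diagM_fix x.1.2).1 hc
    apply Subtype.ext
    apply Prod.ext
    · exact (eq_one_of_all_false g x.1.1 ((Aux.flip_fixed_iff (pnone g) x.1.1).1 hf)).symm
    · apply toAdd.injective
      funext j
      show (if j = 0 then x.1.2.toAdd 0 else 0) = x.1.2.toAdd j
      by_cases hj : j = 0
      · subst hj; rw [if_pos rfl]
      · rw [fin2_eq_one hj, if_neg (by decide), h1]
  right_inv p := by
    apply Prod.ext
    · exact (freeGroup_isEmpty_eq_one p.1).symm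
    · show ofAdd (if (0 : Fin 2) = 0 then p.2.toAdd else 0) = p.2
      rw [if_pos rfl]
      rfl
  map_mul' x y := by
    apply Prod.ext
    · exact (one_mul 1).symm
    · show ofAdd ((x.1.2 * y.1.2).toAdd 0) = ofAdd (x.1.2.toAdd 0) * ofAdd (y.1.2.toAdd 0)
      rw [toAdd_mul, Pi.add_apply, ofAdd_add]

/-- `t = 1`, `ℤ`-factor case -/
def fix1ψ : fixedSubgroup (φbig g (Aux.flipEquiv (pzero g)) diagM 1).toMonoidHom
    ≃* (FreeGroup (Fin 1) × Multiplicative ℤ) where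
  toFun x := (ρ1 g x.1.1, ofAdd (x.1.2.toAdd 0))
  invFun p := ⟨(ι1 g hg p.1, ofAdd fun j => if j = 0 then p.2.toAdd else 0), by
    apply (mem_fix_φbig g _ _ _ _).2
    constructor
    · rw [Aux.flipEquiv_apply]
      exact flip_ι1 g hg p.1
    · rw [MonoidHom.one_apply]
      apply (diagM_fix _).2
      show (if (1 : Fin 2) = 0 then p.2.toAdd else 0) = 0
      rw [if_neg (by decide)]⟩
  left_inv x := by
    obtain ⟨hf, hc⟩ := (mem_fix_φbig g _ _ _ x.1).1 x.2
    rw [Aux.flipEquiv_apply] at hf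
    rw [MonoidHom.one_apply] at hc
    have h1 := (diagM_fix x.1.2).1 hc
    apply Subtype.ext
    apply Prod.ext
    · exact ι1ρ1 g hg x.1.1 ((Aux.flip_fixed_iff (pzero g) x.1.1).1 hf)
    · apply toAdd.injective
      funext j
      show (if j = 0 then x.1.2.toAdd 0 else 0) = x.1.2.toAdd j
      by_cases hj : j = 0
      · subst hj; rw [if_pos rfl]
      · rw [fin2_eq_one hj, if_neg (by decide), h1]
  right_inv p := by
    apply Prod.ext
    · exact ρ1ι1 g hg p.1
    · show ofAdd (if (0 : Fin 2) = 0 then p.2.toAdd else 0) = p.2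
      rw [if_pos rfl]
      rfl
  map_mul' x y := by
    apply Prod.ext
    · exact (ρ1 g).map_mul _ _
    · show ofAdd ((x.1.2 * y.1.2).toAdd 0) = ofAdd (x.1.2.toAdd 0) * ofAdd (y.1.2.toAdd 0)
      rw [toAdd_mul, Pi.add_apply, ofAdd_add]

end Glue


theorem stmt12 (g : ℕ) (hg : 2 ≤ g) (t : ℕ) :
    (∃ φ : (FreeGroup (Fin g) × Multiplicative (Fin 2 → ℤ)) ≃*
           (FreeGroup (Fin g) × Multiplicative (Fin 2 → ℤ)),
        Nonempty ((fixedSubgroup φ.toMonoidHom) ≃* FreeGroup (Fin t))) ∧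
    (∃ ψ : (FreeGroup (Fin g) × Multiplicative (Fin 2 → ℤ)) ≃*
           (FreeGroup (Fin g) × Multiplicative (Fin 2 → ℤ)),
        Nonempty ((fixedSubgroup ψ.toMonoidHom) ≃*
          (FreeGroup (Fin t) × Multiplicative ℤ))) := by
  constructor
  · -- free fixed subgroup
    match t with
    | 0 => exact ⟨Glue.φbig g (Aux.flipEquiv (Glue.pnone g)) Glue.negM 1, ⟨Glue.fix0φ g⟩⟩
    | 1 => exact ⟨Glue.φbig g (Aux.flipEquiv (Glue.pzero g)) Glue.negM 1, ⟨Glue.fix1φ g hg⟩⟩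
    | (n+2) =>
      have hk : 0 < n + 1 := by omega
      refine ⟨Glue.φmain g (n+1), ⟨(((Glue.fixφEquiv g hg (n+1) hk).trans
        (Aux2.e2 (n+1) hk)).trans (FreeGroup.freeGroupCongr (finCongr (by omega))))⟩⟩
  · -- `F_t × ℤ` fixed subgroup
    match t with
    | 0 =>
      refine ⟨Glue.φbig g (Aux.flipEquiv (Glue.pnone g)) Glue.diagM 1, ⟨Glue.fix0ψ g⟩⟩
    | 1 => exact ⟨Glue.φbig g (Aux.flipEquiv (Glue.pzero g)) Glue.diagM 1, ⟨Glue.fix1ψ g hg⟩⟩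
    | (n+2) =>
      have hk : 0 < n + 1 := by omega
      refine ⟨Glue.ψmain g (n+1), ⟨((Glue.fixψEquiv g hg (n+1) hk).trans
        (MulEquiv.prodCongr (Aux2.e2 (n+1) hk) (MulEquiv.refl _))).trans
        (MulEquiv.prodCongr (FreeGroup.freeGroupCongr (finCongr (by omega)))
          (MulEquiv.refl _))⟩⟩
end
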